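/- arXiv:2306.09128 — 8 statements merged into one kernel-verified Lean document; each statement's English description precedes it below -/
import Mathlib

section
/- Let d: V × V → ℝ≥0 be a symmetric function with d(i,i)=0 satisfying the s-relaxed triangle inequality d(i,j) ≤ s·(d(i,k)+d(k,j)) for all i,j,k, for some s ≥ 1. Let π: V → ℝ₊ be a weight function with π(V)=1, and suppose ∑_{i,j∈V} π(i)·π(j)·d(i,j) = 2. Let L ⊆ V with diameter diam(L) := max_{i,j∈L} d(i,j). Then ∑_{i∉L} π(i)·d(i,L) ≥ 1/s² − (1/2)·diam(L), where d(i,L) := min_{j∈L} d(i,j). -/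
/-- Total distance to core: for a semi-metric `d` satisfying the
`s`-relaxed triangle inequality, a probability weight `π` with
`∑ᵢ∑ⱼ π i π j d i j = 2`, and a nonempty set `L`,
`∑_{i ∉ L} π i · d(i, L) ≥ 1/s² − diam(L)/2`. -/
theorem stmt_1 {V : Type*} [Fintype V] [DecidableEq V]
    (d : V → V → ℝ) (hd0 : ∀ i, d i i = 0) (hdsymm : ∀ i j, d i j = d j i)
    (hdnonneg : ∀ i j, 0 ≤ d i j)
    (s : ℝ) (hs : 1 ≤ s)
    (hrelax : ∀ i j k, d i j ≤ s * (d i k + d k j))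
    (π : V → ℝ) (hπ : ∀ i, 0 < π i) (hπ1 : ∑ i, π i = 1)
    (hsum : ∑ i, ∑ j, π i * π j * d i j = 2)
    (L : Finset V) (hL : L.Nonempty) :
    1 / s ^ 2 - (1 / 2) * ((L ×ˢ L).sup' (hL.product hL) fun p => d p.1 p.2)
      ≤ ∑ i ∈ Lᶜ, π i * (L.inf' hL fun j => d i j) := by
  set D := (L ×ˢ L).sup' (hL.product hL) fun p => d p.1 p.2 with hDdef
  set g : V → ℝ := fun i => L.inf' hL fun j => d i j with hgdef
  have hgnonneg : ∀ i, 0 ≤ g i := fun i =>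
    Finset.le_inf' hL _ fun j _ => hdnonneg i j
  have hgL : ∀ i ∈ L, g i = 0 := by
    intro i hi
    have h1 : g i ≤ d i i := Finset.inf'_le _ hi
    rw [hd0] at h1
    exact le_antisymm h1 (hgnonneg i)
  have hDle : ∀ a ∈ L, ∀ b ∈ L, d a b ≤ D := by
    intro a ha b hb
    exact Finset.le_sup' (f := fun p : V × V => d p.1 p.2)
      (show ((a, b) : V × V) ∈ L ×ˢ L from Finset.mem_product.mpr ⟨ha, hb⟩)
  have hs0 : (0:ℝ) < s := lt_of_lt_of_le one_pos hs
  -- key pointwise bound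
  have hkey : ∀ i j, d i j ≤ s ^ 2 * (g i + g j + D) := by
    intro i j
    obtain ⟨a, ha, hga⟩ := Finset.exists_mem_eq_inf' hL (fun k => d i k)
    obtain ⟨b, hb, hgb⟩ := Finset.exists_mem_eq_inf' hL (fun k => d j k)
    have h1 : d i j ≤ s * (d i a + d a j) := hrelax i j a
    have h2 : d a j ≤ s * (d a b + d b j) := hrelax a j b
    have h3 : d a b ≤ D := hDle a ha b hb
    have h4 : d b j = g j := by rw [hdsymm b j]; exact hgb.symm
    have h5 : d i a = g i := hga.symm
    have hgi := hgnonneg i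
    have hgj := hgnonneg j
    have hD0 : 0 ≤ D := le_trans (hdnonneg a b) h3
    nlinarith [h1, mul_le_mul_of_nonneg_left h2 (le_of_lt hs0),
      mul_le_mul_of_nonneg_left h3 (mul_nonneg (le_of_lt hs0) (le_of_lt hs0)),
      mul_nonneg (mul_nonneg (le_of_lt hs0) (sub_nonneg.mpr hs)) hgi,
      mul_nonneg (mul_nonneg (le_of_lt hs0) (sub_nonneg.mpr hs)) hgj]
  set S : ℝ := ∑ i, π i * g i with hSdef
  have hπnn : ∀ i, 0 ≤ π i := fun i => (hπ i).le
  -- sum bound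
  have hsum2 : (2:ℝ) ≤ s ^ 2 * (2 * S + D) := by
    have step1 : ∑ i, ∑ j, π i * π j * d i j
        ≤ ∑ i, ∑ j, π i * π j * (s ^ 2 * (g i + g j + D)) := by
      apply Finset.sum_le_sum
      intro i _
      apply Finset.sum_le_sum
      intro j _
      exact mul_le_mul_of_nonneg_left (hkey i j) (mul_nonneg (hπnn i) (hπnn j))
    have step2 : ∑ i, ∑ j, π i * π j * (s ^ 2 * (g i + g j + D))
        = s ^ 2 * (2 * S + D) := by
      have e : ∀ i : V, ∑ j, π i * π j * (s ^ 2 * (g i + g j + D))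
          = s ^ 2 * (π i * g i + π i * S + π i * D) := by
        intro i
        have : ∀ j : V, π i * π j * (s ^ 2 * (g i + g j + D))
            = s ^ 2 * ((π i * g i + π i * D) * π j + π i * (π j * g j)) := by
          intro j; ring
        rw [Finset.sum_congr rfl fun j _ => this j, ← Finset.mul_sum,
          Finset.sum_add_distrib, ← Finset.mul_sum, ← Finset.mul_sum, hπ1, ← hSdef]
        ring
      rw [Finset.sum_congr rfl fun i _ => e i, ← Finset.mul_sum,
        Finset.sum_add_distrib, Finset.sum_add_distrib, ← hSdef,
        ← Finset.sum_mul, ← Finset.sum_mul, hπ1]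
      ring
    calc (2:ℝ) = ∑ i, ∑ j, π i * π j * d i j := hsum.symm
      _ ≤ ∑ i, ∑ j, π i * π j * (s ^ 2 * (g i + g j + D)) := step1
      _ = s ^ 2 * (2 * S + D) := step2
  -- S equals the sum over the complement
  have hScompl : S = ∑ i ∈ Lᶜ, π i * g i := by
    rw [hSdef]
    symm
    apply Finset.sum_subset (Finset.subset_univ _)
    intro i _ hi
    rw [Finset.mem_compl, not_not] at hi
    rw [hgL i hi, mul_zero]
  have hs2 : (0:ℝ) < s ^ 2 := pow_pos hs0 2
  have hinv : s ^ 2 * (1 / s ^ 2) = 1 := mul_one_div_cancel (ne_of_gt hs2)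
  rw [← hScompl]
  nlinarith [hsum2, hs2, hinv]
end

section
/- Let G = (V,E,w) be a directed graph with edge weights w: E → ℝ₊ and vertex weights π: V → ℝ₊. For any nonempty proper subset S ⊂ V, there exist vectors v: V → ℝⁿ satisfying ∑_i π(i)·v_i = 0, ∑_i π(i)·‖v_i‖² = 1, and the ℓ₂² triangle inequalities ‖v_i−v_j‖² + ‖v_j−v_k‖² ≥ ‖v_i−v_k‖² for all i,j,k ∈ V, such that for every circulation F on G with F(e) ≤ w(e) for all edges e, we have ∑_{i<j} (1/2)(F(i,j)+F(j,i))·‖v_i−v_j‖² ≤ 2·φ⃗_π(S), where φ⃗_π(S) = min{w(δ⁺(S)), w(δ⁻(S))} / min{π(S), π(V∖S)}. -/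
private lemma esq (x : EuclideanSpace ℝ (Fin 1)) : ‖x‖ ^ 2 = (x 0) ^ 2 := by
  rw [EuclideanSpace.norm_eq, Real.sq_sqrt (by positivity)]
  simp [Fin.sum_univ_one, sq_abs]

/-- Easy direction of the SDP relaxation: for any nonempty proper
`S ⊂ V` of a weighted directed graph, there is a feasible embedding for the
`λ^Δ_π` program whose objective value against every feasible circulation is at
most `2 φ⃗_π(S)`. -/
theorem stmt_2 {V : Type*} [Fintype V] [DecidableEq V]
    (w : V → V → ℝ) (hw : ∀ i j, 0 ≤ w i j)
    (π : V → ℝ) (hπ : ∀ i, 0 < π i)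
    (S : Finset V) (hS : S.Nonempty) (hS' : S ≠ Finset.univ) :
    ∃ (m : ℕ) (v : V → EuclideanSpace ℝ (Fin m)),
      (∑ i, π i • v i = 0) ∧
      (∑ i, π i * ‖v i‖ ^ 2 = 1) ∧
      (∀ i j k, ‖v i - v k‖ ^ 2 ≤ ‖v i - v j‖ ^ 2 + ‖v j - v k‖ ^ 2) ∧
      ∀ F : V → V → ℝ,
        (∀ i j, 0 ≤ F i j) →
        (∀ i j, F i j ≤ w i j) →
        (∀ i, ∑ j, F i j = ∑ j, F j i) →
        (1 / 4) * ∑ i, ∑ j, (F i j + F j i) * ‖v i - v j‖ ^ 2 ≤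
          2 * (min (∑ i ∈ S, ∑ j ∈ Sᶜ, w i j) (∑ i ∈ Sᶜ, ∑ j ∈ S, w i j) /
            min (∑ i ∈ S, π i) (∑ i ∈ Sᶜ, π i)) := by
  classical
  have hScne : Sᶜ.Nonempty := by
    by_contra h
    rw [Finset.not_nonempty_iff_eq_empty, Finset.compl_eq_empty_iff] at h
    exact hS' h
  set P := ∑ i ∈ S, π i with hPdef
  set Q := ∑ i ∈ Sᶜ, π i with hQdef
  have hP0 : 0 < P := Finset.sum_pos (fun i _ => hπ i) hS
  have hQ0 : 0 < Q := Finset.sum_pos (fun i _ => hπ i) hScne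
  set T := P + Q with hTdef
  have hT0 : 0 < T := by positivity
  set s := Real.sqrt (P * Q * T) with hsdef
  have hs0 : 0 < s := Real.sqrt_pos.mpr (by positivity)
  have hs2 : s ^ 2 = P * Q * T := Real.sq_sqrt (by positivity)
  have hsne : s ≠ 0 := ne_of_gt hs0
  set a := Q / s with hadef
  set b := -(P / s) with hbdef
  set c : V → ℝ := fun i => if i ∈ S then a else b with hcdef
  set v : V → EuclideanSpace ℝ (Fin 1) := fun i => WithLp.toLp 2 (fun _ => c i) with hvdef
  have hdiff : ∀ p q : V, ‖v p - v q‖ ^ 2 = (c p - c q) ^ 2 := by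
    intro p q
    rw [esq]
    rfl
  refine ⟨1, v, ?_, ?_, ?_, ?_⟩
  · have he : ∀ i : V, π i • v i = (π i * c i) • (WithLp.toLp 2 (fun _ => (1:ℝ)) : EuclideanSpace ℝ (Fin 1)) := by
      intro i
      rw [mul_smul]
      congr 1
      ext x
      show c i = c i * 1
      rw [mul_one]
    simp only [he, ← Finset.sum_smul]
    rw [← Finset.sum_add_sum_compl S]
    have h1 : ∑ i ∈ S, π i * c i = P * a := by
      rw [show ∑ i ∈ S, π i * c i = ∑ i ∈ S, π i * a from
        Finset.sum_congr rfl fun i hi => by simp [hcdef, hi], ← Finset.sum_mul]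
    have h2 : ∑ i ∈ Sᶜ, π i * c i = Q * b := by
      rw [show ∑ i ∈ Sᶜ, π i * c i = ∑ i ∈ Sᶜ, π i * b from
        Finset.sum_congr rfl fun i hi => by
          simp [hcdef, Finset.mem_compl.mp hi], ← Finset.sum_mul]
    rw [h1, h2, hadef, hbdef]
    have hz : P * (Q / s) + Q * -(P / s) = 0 := by field_simp <;> ring
    rw [hz, zero_smul]
  · have hv : ∀ i : V, ‖v i‖ ^ 2 = (c i) ^ 2 := fun i => esq _
    simp only [hv]
    rw [← Finset.sum_add_sum_compl S]
    have h1 : ∑ i ∈ S, π i * c i ^ 2 = P * a ^ 2 := by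
      rw [show ∑ i ∈ S, π i * c i ^ 2 = ∑ i ∈ S, π i * a ^ 2 from
        Finset.sum_congr rfl fun i hi => by simp [hcdef, hi], ← Finset.sum_mul]
    have h2 : ∑ i ∈ Sᶜ, π i * c i ^ 2 = Q * b ^ 2 := by
      rw [show ∑ i ∈ Sᶜ, π i * c i ^ 2 = ∑ i ∈ Sᶜ, π i * b ^ 2 from
        Finset.sum_congr rfl fun i hi => by
          simp [hcdef, Finset.mem_compl.mp hi], ← Finset.sum_mul]
    rw [h1, h2, hadef, hbdef]
    have : P * (Q / s) ^ 2 + Q * (-(P / s)) ^ 2 = P * Q * (P + Q) / s ^ 2 := by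
      field_simp
      ring
    rw [this, hs2]
    field_simp
    exact hTdef.symm
  · intro i j k
    rw [hdiff, hdiff, hdiff]
    by_cases hi : i ∈ S <;> by_cases hj : j ∈ S <;> by_cases hk : k ∈ S <;>
      simp [hcdef, hi, hj, hk] <;> nlinarith [sq_nonneg (a - b), sq_nonneg (b - a)]
  · intro F hF0 hFw hcirc
    simp only [hdiff]
    set d := (a - b) ^ 2 with hddef
    set A := ∑ i ∈ S, ∑ j ∈ Sᶜ, F i j with hAdef
    set B := ∑ i ∈ Sᶜ, ∑ j ∈ S, F i j with hBdef
    have hsplit : ∀ g : V → V → ℝ, ∑ i : V, ∑ j : V, g i j =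
        ((∑ i ∈ S, ∑ j ∈ S, g i j) + ∑ i ∈ S, ∑ j ∈ Sᶜ, g i j) +
        ((∑ i ∈ Sᶜ, ∑ j ∈ S, g i j) + ∑ i ∈ Sᶜ, ∑ j ∈ Sᶜ, g i j) := by
      intro g
      have h1 : ∀ t : Finset V, ∑ i ∈ t, ∑ j : V, g i j =
          (∑ i ∈ t, ∑ j ∈ S, g i j) + ∑ i ∈ t, ∑ j ∈ Sᶜ, g i j := by
        intro t
        rw [← Finset.sum_add_distrib]
        exact Finset.sum_congr rfl fun i _ => (Finset.sum_add_sum_compl S (g i)).symm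
      rw [← Finset.sum_add_sum_compl S (fun i => ∑ j : V, g i j), h1 S, h1 Sᶜ]
    -- A = B from circulation
    have hAB : A = B := by
      have h : ∑ i ∈ S, ∑ j : V, F i j = ∑ i ∈ S, ∑ j : V, F j i :=
        Finset.sum_congr rfl fun i _ => hcirc i
      have e1 : ∑ i ∈ S, ∑ j : V, F i j =
          (∑ i ∈ S, ∑ j ∈ S, F i j) + A := by
        rw [hAdef, ← Finset.sum_add_distrib]
        exact Finset.sum_congr rfl fun i _ => (Finset.sum_add_sum_compl S (F i)).symm
      have e2 : ∑ i ∈ S, ∑ j : V, F j i =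
          (∑ i ∈ S, ∑ j ∈ S, F j i) + ∑ i ∈ S, ∑ j ∈ Sᶜ, F j i := by
        rw [← Finset.sum_add_distrib]
        exact Finset.sum_congr rfl fun i _ => (Finset.sum_add_sum_compl S fun j => F j i).symm
      have e3 : ∑ i ∈ S, ∑ j ∈ S, F j i = ∑ i ∈ S, ∑ j ∈ S, F i j :=
        Finset.sum_comm
      have e4 : ∑ i ∈ S, ∑ j ∈ Sᶜ, F j i = B := Finset.sum_comm
      rw [e1, e2, e3, e4] at h
      linarith
    -- evaluate the objective
    have hSS : ∑ i ∈ S, ∑ j ∈ S, (F i j + F j i) * (c i - c j) ^ 2 = 0 :=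
      Finset.sum_eq_zero fun i hi => Finset.sum_eq_zero fun j hj => by
        simp [hcdef, hi, hj]
    have hCC : ∑ i ∈ Sᶜ, ∑ j ∈ Sᶜ, (F i j + F j i) * (c i - c j) ^ 2 = 0 :=
      Finset.sum_eq_zero fun i hi => Finset.sum_eq_zero fun j hj => by
        simp [hcdef, Finset.mem_compl.mp hi, Finset.mem_compl.mp hj]
    have hSC : ∑ i ∈ S, ∑ j ∈ Sᶜ, (F i j + F j i) * (c i - c j) ^ 2
        = (A + B) * d := by
      have : ∑ i ∈ S, ∑ j ∈ Sᶜ, (F i j + F j i) * (c i - c j) ^ 2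
          = ∑ i ∈ S, ∑ j ∈ Sᶜ, (F i j * d + F j i * d) :=
        Finset.sum_congr rfl fun i hi => Finset.sum_congr rfl fun j hj => by
          simp only [hcdef, hi, Finset.mem_compl.mp hj, if_true, if_false, hddef]
          ring
      rw [this]
      simp only [Finset.sum_add_distrib, ← Finset.sum_mul]
      rw [show ∑ i ∈ S, ∑ j ∈ Sᶜ, F j i = B from Finset.sum_comm, ← hAdef]
      ring
    have hCS : ∑ i ∈ Sᶜ, ∑ j ∈ S, (F i j + F j i) * (c i - c j) ^ 2
        = (B + A) * d := by
      have : ∑ i ∈ Sᶜ, ∑ j ∈ S, (F i j + F j i) * (c i - c j) ^ 2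
          = ∑ i ∈ Sᶜ, ∑ j ∈ S, (F i j * d + F j i * d) :=
        Finset.sum_congr rfl fun i hi => Finset.sum_congr rfl fun j hj => by
          simp only [hcdef, hj, Finset.mem_compl.mp hi, if_true, if_false, hddef]
          ring
      rw [this]
      simp only [Finset.sum_add_distrib, ← Finset.sum_mul]
      rw [show ∑ i ∈ Sᶜ, ∑ j ∈ S, F j i = A from Finset.sum_comm, ← hBdef]
      ring
    rw [hsplit, hSS, hCC, hSC, hCS, hAB]
    have hobj : (1 / 4 : ℝ) * ((0 + (B + B) * d) + ((B + B) * d + 0)) = B * d := by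
      ring
    rw [hobj]
    -- bounds
    set W1 := ∑ i ∈ S, ∑ j ∈ Sᶜ, w i j with hW1def
    set W2 := ∑ i ∈ Sᶜ, ∑ j ∈ S, w i j with hW2def
    have hB0 : 0 ≤ B := Finset.sum_nonneg fun i _ => Finset.sum_nonneg fun j _ => hF0 i j
    have hBW1 : B ≤ W1 := by
      rw [← hAB]
      exact Finset.sum_le_sum fun i _ => Finset.sum_le_sum fun j _ => hFw i j
    have hBW2 : B ≤ W2 :=
      Finset.sum_le_sum fun i _ => Finset.sum_le_sum fun j _ => hFw i j
    have hBM : B ≤ min W1 W2 := le_min hBW1 hBW2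
    have hM0 : 0 ≤ min W1 W2 := le_trans hB0 hBM
    have hdval : d = T / (P * Q) := by
      have hab : a - b = T / s := by
        rw [hadef, hbdef, hTdef]
        field_simp
        ring
      rw [hddef, hab, div_pow, hs2]
      rw [show T ^ 2 = T * T from sq T]
      field_simp
    rw [hdval]
    clear_value P Q T s a b c v A B W1 W2
    clear hdval hdiff hcirc hFw hF0 hsplit hAB hSS hCC hSC hCS hobj hs2 hsne hs0
    rcases le_total P Q with h | h
    · rw [min_eq_left h]
      rw [show B * (T / (P * Q)) = B * T / (P * Q) from (mul_div_assoc _ _ _).symm,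
        show (2 : ℝ) * (min W1 W2 / P) = 2 * min W1 W2 / P from (mul_div_assoc _ _ _).symm,
        div_le_div_iff₀ (by positivity) hP0]
      nlinarith [mul_le_mul_of_nonneg_right hBM (by positivity : (0:ℝ) ≤ T * P),
        mul_nonneg hM0 hP0.le, mul_nonneg (mul_nonneg hM0 hP0.le) (sub_nonneg.mpr h)]
    · rw [min_eq_right h]
      rw [show B * (T / (P * Q)) = B * T / (P * Q) from (mul_div_assoc _ _ _).symm,
        show (2 : ℝ) * (min W1 W2 / Q) = 2 * min W1 W2 / Q from (mul_div_assoc _ _ _).symm,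
        div_le_div_iff₀ (by positivity) hQ0]
      nlinarith [mul_le_mul_of_nonneg_right hBM (by positivity : (0:ℝ) ≤ T * Q),
        mul_nonneg hM0 hQ0.le, mul_nonneg (mul_nonneg hM0 hQ0.le) (sub_nonneg.mpr h)]
end

section
/- Let G be an undirected graph with capacity function w on edges, and suppose f is a feasible multi-commodity flow in G with demand graph D, i.e., f assigns values f_p ≥ 0 to paths in G such that ∑_{p ∋ e} f_p ≤ w_e for every edge e, and for each pair (i,j) the total flow on paths from i to j equals D(i,j). Let F be the graph with F(i,j) = ∑_{p ∋ ij} f_p, and for a path p = (i_1,…,i_ℓ) define T_p = ∑_{k=1}^{ℓ−1} L_{i_k,i_{k+1}} − L_{i_1,i_ℓ}, where L_{i,j} is the Laplacian of edge ij. Then ∑_p f_p T_p = L(F) − L(D), and consequently λ₂(L(D)) ≤ λ₂(L(G) − ∑_p f_p T_p). -/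
open Matrix

/-- Laplacian of the single (undirected) edge `ij`: `(e_i − e_j)(e_i − e_j)ᵀ`. -/
noncomputable def edgeLap {V : Type*} [Fintype V] [DecidableEq V] (i j : V) :
    Matrix V V ℝ :=
  Matrix.vecMulVec (Pi.single i 1 - Pi.single j 1) (Pi.single i 1 - Pi.single j 1)

/-- Laplacian of a path, given as the list of its vertices. -/
noncomputable def pathLap {V : Type*} [Fintype V] [DecidableEq V] (l : List V) :
    Matrix V V ℝ :=
  ((l.zip l.tail).map fun q => edgeLap q.1 q.2).sum

/-- `T_p = ∑_k L_{i_k, i_{k+1}} − L_{i_1, i_ℓ}` for a path `p = (i_1, …, i_ℓ)`. -/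
noncomputable def Tpath {V : Type*} [Fintype V] [DecidableEq V] [Inhabited V]
    (l : List V) : Matrix V V ℝ :=
  pathLap l - edgeLap l.headI l.getLastI

/-- Number of times the path `l` uses the directed edge `(i, j)`. -/
def pairCount {V : Type*} [DecidableEq V] (l : List V) (i j : V) : ℕ :=
  (l.zip l.tail).count (i, j)

/-- Second smallest eigenvalue (with multiplicity) of a symmetric matrix. -/
noncomputable def lambda2 {n : ℕ} (M : Matrix (Fin (n + 2)) (Fin (n + 2)) ℝ) : ℝ :=
  if h : M.IsHermitian then (h.eigenvalues ∘ (Tuple.sort h.eigenvalues)) 1 else 0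

section aux

lemma dot_sum' {m : ℕ} {ι : Type*} (s : Finset ι) (x : Fin m → ℝ) (g : ι → Fin m → ℝ) :
    x ⬝ᵥ (∑ i ∈ s, g i) = ∑ i ∈ s, x ⬝ᵥ g i := by
  simp only [dotProduct, Finset.sum_apply, Finset.mul_sum]
  exact Finset.sum_comm

lemma sum_dot' {m : ℕ} {ι : Type*} (s : Finset ι) (x : Fin m → ℝ) (g : ι → Fin m → ℝ) :
    (∑ i ∈ s, g i) ⬝ᵥ x = ∑ i ∈ s, g i ⬝ᵥ x := by
  simp only [dotProduct, Finset.sum_apply, Finset.sum_mul]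
  exact Finset.sum_comm

lemma ortho_dot {m : ℕ} {A : Matrix (Fin m) (Fin m) ℝ} (hA : A.IsHermitian) (i j : Fin m) :
    ⇑(hA.eigenvectorBasis i) ⬝ᵥ ⇑(hA.eigenvectorBasis j) = if i = j then 1 else 0 := by
  have := hA.eigenvectorBasis.orthonormal
  rw [orthonormal_iff_ite] at this
  simpa [PiLp.inner_apply, dotProduct, RCLike.inner_apply, mul_comm] using this i j

lemma expand_basis {m : ℕ} {A : Matrix (Fin m) (Fin m) ℝ} (hA : A.IsHermitian)
    (x : Fin m → ℝ) :
    x = ∑ i, (⇑(hA.eigenvectorBasis i) ⬝ᵥ x) • ⇑(hA.eigenvectorBasis i) := by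
  have h := congrArg WithLp.ofLp (hA.eigenvectorBasis.sum_repr' (WithLp.toLp 2 x))
  have h2 : ∀ i, (inner ℝ (hA.eigenvectorBasis i) (WithLp.toLp 2 x) : ℝ)
      = ⇑(hA.eigenvectorBasis i) ⬝ᵥ x := fun i => by
    simp [PiLp.inner_apply, dotProduct, RCLike.inner_apply, mul_comm]
  simp_rw [h2] at h
  simpa using h.symm

lemma qf_eigen {m : ℕ} {A : Matrix (Fin m) (Fin m) ℝ} (hA : A.IsHermitian)
    (x : Fin m → ℝ) :
    x ⬝ᵥ A *ᵥ x = ∑ i, hA.eigenvalues i * (⇑(hA.eigenvectorBasis i) ⬝ᵥ x) ^ 2 := by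
  have hAv : A *ᵥ x = ∑ i, (⇑(hA.eigenvectorBasis i) ⬝ᵥ x) •
      (hA.eigenvalues i • ⇑(hA.eigenvectorBasis i)) := by
    conv_lhs => rw [expand_basis hA x]
    rw [← mulVecLin_apply, map_sum]
    refine Finset.sum_congr rfl fun i _ => ?_
    rw [_root_.map_smul, mulVecLin_apply, hA.mulVec_eigenvectorBasis]
  conv_lhs => rw [hAv]
  rw [dot_sum']
  refine Finset.sum_congr rfl fun i _ => ?_
  rw [dotProduct_smul, dotProduct_smul, dotProduct_comm]
  simp; ring

lemma norm_eigen {m : ℕ} {A : Matrix (Fin m) (Fin m) ℝ} (hA : A.IsHermitian)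
    (x : Fin m → ℝ) :
    x ⬝ᵥ x = ∑ i, (⇑(hA.eigenvectorBasis i) ⬝ᵥ x) ^ 2 := by
  nth_rewrite 1 [expand_basis hA x]
  rw [sum_dot']
  refine Finset.sum_congr rfl fun i _ => ?_
  rw [smul_dotProduct, smul_eq_mul, dotProduct_comm, sq]

lemma lambda2_mono {n : ℕ} {A B : Matrix (Fin (n+2)) (Fin (n+2)) ℝ}
    (hA : A.IsHermitian) (hB : B.IsHermitian)
    (h : ∀ x : Fin (n+2) → ℝ, x ⬝ᵥ A *ᵥ x ≤ x ⬝ᵥ B *ᵥ x) :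
    lambda2 A ≤ lambda2 B := by
  rw [lambda2, dif_pos hA, lambda2, dif_pos hB]
  set σ := Tuple.sort hA.eigenvalues with hσ
  set τ := Tuple.sort hB.eigenvalues with hτ
  simp only [Function.comp_apply]
  set v0 : Fin (n+2) → ℝ := ⇑(hA.eigenvectorBasis (σ 0)) with hv0
  set u0 : Fin (n+2) → ℝ := ⇑(hB.eigenvectorBasis (τ 0)) with hu0
  set u1 : Fin (n+2) → ℝ := ⇑(hB.eigenvectorBasis (τ 1)) with hu1
  have h01 : (0 : Fin (n+2)) ≠ 1 := by simp [Fin.ext_iff]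
  have hτ01 : τ 0 ≠ τ 1 := fun hc => h01 (τ.injective hc)
  obtain ⟨a, b, hab, horth⟩ : ∃ a b : ℝ, ¬(a = 0 ∧ b = 0) ∧
      a * (v0 ⬝ᵥ u0) + b * (v0 ⬝ᵥ u1) = 0 := by
    by_cases hz : v0 ⬝ᵥ u0 = 0
    · exact ⟨1, 0, by simp, by simp [hz]⟩
    · exact ⟨v0 ⬝ᵥ u1, -(v0 ⬝ᵥ u0), fun hc => hz (by simpa using hc.2), by ring⟩
  set x : Fin (n+2) → ℝ := a • u0 + b • u1 with hx
  have hpos : 0 < a ^ 2 + b ^ 2 := by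
    rcases not_and_or.mp hab with ha | hb
    · have := pow_pos (abs_pos.mpr ha) 2
      nlinarith [sq_nonneg a, sq_nonneg b, sq_abs a]
    · nlinarith [sq_nonneg a, sq_abs b, abs_pos.mpr hb, sq_nonneg (|b|-1)]
  have hd : ∀ k, ⇑(hB.eigenvectorBasis k) ⬝ᵥ x =
      a * (if k = τ 0 then 1 else 0) + b * (if k = τ 1 then 1 else 0) := by
    intro k
    rw [hx, dotProduct_add, dotProduct_smul, dotProduct_smul,
      hu0, hu1, ortho_dot hB k (τ 0), ortho_dot hB k (τ 1)]
    simp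
  have hdτ : ∀ k, ⇑(hB.eigenvectorBasis (τ k)) ⬝ᵥ x =
      (if k = 0 then a else 0) + (if k = 1 then b else 0) := by
    intro k
    rw [hd (τ k)]
    simp only [EmbeddingLike.apply_eq_iff_eq]
    split_ifs with h1 h2 h2 <;> simp_all
  have hxB : x ⬝ᵥ B *ᵥ x =
      hB.eigenvalues (τ 0) * a ^ 2 + hB.eigenvalues (τ 1) * b ^ 2 := by
    rw [qf_eigen hB, ← Equiv.sum_comp τ
      (fun i => hB.eigenvalues i * (⇑(hB.eigenvectorBasis i) ⬝ᵥ x) ^ 2)]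
    have : ∀ k : Fin (n+2), hB.eigenvalues (τ k) * (⇑(hB.eigenvectorBasis (τ k)) ⬝ᵥ x) ^ 2
        = (if k = 0 then hB.eigenvalues (τ 0) * a ^ 2 else 0)
          + (if k = 1 then hB.eigenvalues (τ 1) * b ^ 2 else 0) := by
      intro k
      rw [hdτ k]
      by_cases hk0 : k = 0
      · subst hk0; simp [h01.symm]
      · by_cases hk1 : k = 1
        · subst hk1; simp [h01, hk0]
        · simp [hk0, hk1]
    simp_rw [this, Finset.sum_add_distrib, Finset.sum_ite_eq' Finset.univ,
      Finset.mem_univ, if_true]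
  have hxx : x ⬝ᵥ x = a ^ 2 + b ^ 2 := by
    rw [norm_eigen hB, ← Equiv.sum_comp τ
      (fun i => (⇑(hB.eigenvectorBasis i) ⬝ᵥ x) ^ 2)]
    have : ∀ k : Fin (n+2), (⇑(hB.eigenvectorBasis (τ k)) ⬝ᵥ x) ^ 2
        = (if k = 0 then a ^ 2 else 0) + (if k = 1 then b ^ 2 else 0) := by
      intro k
      rw [hdτ k]
      by_cases hk0 : k = 0
      · subst hk0; simp [h01.symm]
      · by_cases hk1 : k = 1
        · subst hk1; simp [h01, hk0]
        · simp [hk0, hk1]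
    simp_rw [this, Finset.sum_add_distrib, Finset.sum_ite_eq' Finset.univ,
      Finset.mem_univ, if_true]
  have hc0 : v0 ⬝ᵥ x = 0 := by
    rw [hx, dotProduct_add, dotProduct_smul, dotProduct_smul, smul_eq_mul, smul_eq_mul]
    linarith [horth]
  have hxA : hA.eigenvalues (σ 1) * (a ^ 2 + b ^ 2) ≤ x ⬝ᵥ A *ᵥ x := by
    rw [qf_eigen hA, ← Equiv.sum_comp σ
      (fun i => hA.eigenvalues i * (⇑(hA.eigenvectorBasis i) ⬝ᵥ x) ^ 2)]
    have hnorm : a ^ 2 + b ^ 2 = ∑ k, (⇑(hA.eigenvectorBasis (σ k)) ⬝ᵥ x) ^ 2 := by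
      rw [← hxx, norm_eigen hA, ← Equiv.sum_comp σ
        (fun i => (⇑(hA.eigenvectorBasis i) ⬝ᵥ x) ^ 2)]
    rw [hnorm, Finset.mul_sum]
    refine Finset.sum_le_sum fun k _ => ?_
    by_cases hk : k = 0
    · subst hk
      rw [← hv0, hc0]
      simp
    · have h1k : (1 : Fin (n+2)) ≤ k := Fin.pos_iff_ne_zero.mpr hk
      have hmono := Tuple.monotone_sort hA.eigenvalues h1k
      simp only [Function.comp_apply] at hmono
      exact mul_le_mul_of_nonneg_right hmono (sq_nonneg _)
  have hmonoB := Tuple.monotone_sort hB.eigenvalues (Fin.zero_le 1)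
  simp only [Function.comp_apply] at hmonoB
  have hxB' : x ⬝ᵥ B *ᵥ x ≤ hB.eigenvalues (τ 1) * (a ^ 2 + b ^ 2) := by
    rw [hxB]; nlinarith [sq_nonneg a]
  have := le_trans hxA (le_trans (h x) hxB')
  exact le_of_mul_le_mul_right (by linarith) hpos

noncomputable def qfL {m : ℕ} (x : Fin m → ℝ) : Matrix (Fin m) (Fin m) ℝ →ₗ[ℝ] ℝ where
  toFun M := x ⬝ᵥ M *ᵥ x
  map_add' M N := by beta_reduce; rw [add_mulVec, dotProduct_add]
  map_smul' c M := by beta_reduce; rw [smul_mulVec, dotProduct_smul]; rfl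

lemma qfL_apply {m : ℕ} (x : Fin m → ℝ) (M : Matrix (Fin m) (Fin m) ℝ) :
    qfL x M = x ⬝ᵥ M *ᵥ x := rfl

lemma dot_single_sub {m : ℕ} (i j : Fin m) (x : Fin m → ℝ) :
    (Pi.single i 1 - Pi.single j 1 : Fin m → ℝ) ⬝ᵥ x = x i - x j := by
  rw [sub_dotProduct, single_dotProduct, single_dotProduct, one_mul, one_mul]

lemma edgeLap_mulVec {m : ℕ} (i j : Fin m) (x : Fin m → ℝ) :
    edgeLap i j *ᵥ x = (x i - x j) • (Pi.single i 1 - Pi.single j 1 : Fin m → ℝ) := by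
  ext a
  simp only [edgeLap, mulVec, vecMulVec_apply, dotProduct, Pi.smul_apply, smul_eq_mul]
  rw [show (∑ b, (Pi.single i 1 - Pi.single j 1 : Fin m → ℝ) a *
      (Pi.single i 1 - Pi.single j 1 : Fin m → ℝ) b * x b)
      = (Pi.single i 1 - Pi.single j 1 : Fin m → ℝ) a *
        ((Pi.single i 1 - Pi.single j 1 : Fin m → ℝ) ⬝ᵥ x) from by
    rw [dotProduct, Finset.mul_sum]; exact Finset.sum_congr rfl fun b _ => by ring]
  rw [dot_single_sub]; ring

lemma edge_qf {m : ℕ} (i j : Fin m) (x : Fin m → ℝ) :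
    x ⬝ᵥ edgeLap i j *ᵥ x = (x i - x j) ^ 2 := by
  rw [edgeLap_mulVec, dotProduct_smul, smul_eq_mul, dotProduct_comm, dot_single_sub, sq]

lemma edgeLap_herm {m : ℕ} (i j : Fin m) : (edgeLap i j).IsHermitian :=
  Matrix.ext fun a b => by
    simp [edgeLap, conjTranspose_apply, vecMulVec_apply, mul_comm]

lemma herm_weighted {m : ℕ} (c : Fin m → Fin m → ℝ) :
    (∑ i, ∑ j, c i j • edgeLap i j).IsHermitian := by
  show _ = _
  rw [conjTranspose_sum]
  refine Finset.sum_congr rfl fun i _ => ?_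
  rw [conjTranspose_sum]
  refine Finset.sum_congr rfl fun j _ => ?_
  show (star (c i j) • (edgeLap i j)ᴴ) = _
  rw [star_trivial, edgeLap_herm i j]

lemma qf_weighted {m : ℕ} (c : Fin m → Fin m → ℝ) (x : Fin m → ℝ) :
    x ⬝ᵥ (∑ i, ∑ j, c i j • edgeLap i j) *ᵥ x = ∑ i, ∑ j, c i j * (x i - x j) ^ 2 := by
  rw [← qfL_apply, map_sum]
  refine Finset.sum_congr rfl fun i _ => ?_
  rw [map_sum]
  refine Finset.sum_congr rfl fun j _ => ?_
  rw [_root_.map_smul, qfL_apply, edge_qf]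
  rfl

lemma list_sum_map {V : Type*} [Fintype V] [DecidableEq V] (L : List (V × V)) :
    (L.map fun q => edgeLap q.1 q.2).sum
      = ∑ i, ∑ j, (L.count (i, j) : ℝ) • edgeLap (V := V) i j := by
  induction L with
  | nil => simp
  | cons a L ih =>
    rw [List.map_cons, List.sum_cons, ih]
    have hcnt : ∀ i j : V, (((a :: L).count (i, j) : ℕ) : ℝ)
        = (L.count (i, j) : ℝ) + if (i, j) = a then 1 else 0 := by
      intro i j
      rw [List.count_cons]
      push_cast
      simp [beq_iff_eq, @eq_comm _ a]
    simp_rw [hcnt, add_smul, Finset.sum_add_distrib]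
    rw [add_comm]
    congr 1
    have : ∀ i j : V, (if (i, j) = a then (1:ℝ) else 0) • edgeLap i j
        = if i = a.1 ∧ j = a.2 then edgeLap a.1 a.2 else 0 := by
      intro i j
      by_cases h : (i, j) = a
      · have h1 : i = a.1 ∧ j = a.2 := Prod.ext_iff.mp h
        rw [if_pos h, if_pos h1, h1.1, h1.2, one_smul]
      · rw [if_neg h, if_neg (fun hc => h (Prod.ext_iff.mpr hc)), zero_smul]
    simp_rw [this, ite_and]
    rw [show (∑ i, ∑ j, if i = a.1 then if j = a.2 then edgeLap (V := V) a.1 a.2 else 0 else 0)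
        = ∑ i : V, (if i = a.1 then edgeLap (V := V) a.1 a.2 else 0) from
      Finset.sum_congr rfl fun i _ => by
        by_cases h : i = a.1
        · subst h; simp [Finset.sum_ite_eq']
        · simp [h]]
    rw [Finset.sum_ite_eq' Finset.univ a.1 (fun _ => edgeLap a.1 a.2),
      if_pos (Finset.mem_univ _)]

lemma pathLap_eq {V : Type*} [Fintype V] [DecidableEq V] (l : List V) :
    pathLap l = ∑ i, ∑ j, (pairCount l i j : ℝ) • edgeLap (V := V) i j := by
  rw [pathLap, list_sum_map]
  rfl

end aux

/-- for a feasible multi-commodity flow `f` with flow graph `F` and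
demand graph `D` in an undirected capacitated graph `G` (given by a symmetric
weight function `w`), `∑_p f_p T_p = L(F) − L(D)`, and consequently
`λ₂(L(D)) ≤ λ₂(L(G) − ∑_p f_p T_p)`. -/
theorem stmt_4 {n : ℕ}
    (w : Fin (n + 2) → Fin (n + 2) → ℝ) (hw0 : ∀ i j, 0 ≤ w i j)
    (hwsymm : ∀ i j, w i j = w j i)
    {P : Type*} [Fintype P]
    (vert : P → List (Fin (n + 2)))
    (hlen : ∀ p, 2 ≤ (vert p).length)
    (hpath : ∀ p, (vert p).Chain' fun a b => 0 < w a b)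
    (f : P → ℝ) (hf : ∀ p, 0 ≤ f p)
    (F D : Fin (n + 2) → Fin (n + 2) → ℝ)
    (hF : ∀ i j, F i j = ∑ p, f p * pairCount (vert p) i j)
    (hD : ∀ i j, D i j = ∑ p ∈ Finset.univ.filter
        (fun p => (vert p).headI = i ∧ (vert p).getLastI = j), f p)
    (hcap : ∀ i j, F i j + F j i ≤ w i j) :
    (∑ p, f p • Tpath (vert p)) =
      (∑ i, ∑ j, F i j • edgeLap i j) - (∑ i, ∑ j, D i j • edgeLap i j) ∧
    lambda2 (∑ i, ∑ j, D i j • edgeLap i j) ≤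
      lambda2 ((1 / 2 : ℝ) • (∑ i, ∑ j, w i j • edgeLap i j) -
        ∑ p, f p • Tpath (vert p)) := by
  have key1 : ∑ p, f p • pathLap (vert p) = ∑ i, ∑ j, F i j • edgeLap i j := by
    simp_rw [pathLap_eq, Finset.smul_sum, smul_smul]
    rw [Finset.sum_comm]
    refine Finset.sum_congr rfl fun i _ => ?_
    rw [Finset.sum_comm]
    refine Finset.sum_congr rfl fun j _ => ?_
    rw [hF, Finset.sum_smul]
  have key2 : ∑ p, f p • edgeLap (vert p).headI (vert p).getLastI
      = ∑ i, ∑ j, D i j • edgeLap i j := by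
    have fib := Finset.sum_fiberwise_of_maps_to
      (s := (Finset.univ : Finset P)) (t := (Finset.univ : Finset (Fin (n+2) × Fin (n+2))))
      (g := fun p => ((vert p).headI, (vert p).getLastI))
      (fun p _ => Finset.mem_univ _)
      (fun p => f p • edgeLap (vert p).headI (vert p).getLastI)
    rw [← fib, Fintype.sum_prod_type]
    refine Finset.sum_congr rfl fun i _ => Finset.sum_congr rfl fun j _ => ?_
    rw [hD, Finset.sum_smul]
    refine Finset.sum_congr ?_ fun p hp => ?_
    · ext p
      simp [Prod.ext_iff]
    · have h1 := (Finset.mem_filter.mp hp).2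
      rw [h1.1, h1.2]
  have part1 : (∑ p, f p • Tpath (vert p)) =
      (∑ i, ∑ j, F i j • edgeLap i j) - (∑ i, ∑ j, D i j • edgeLap i j) := by
    simp_rw [Tpath, smul_sub]
    rw [Finset.sum_sub_distrib, key1, key2]
  refine ⟨part1, ?_⟩
  set cB : Fin (n+2) → Fin (n+2) → ℝ := fun i j => (1/2) * w i j - F i j + D i j with hcB
  have harg : (1 / 2 : ℝ) • (∑ i, ∑ j, w i j • edgeLap i j) - ∑ p, f p • Tpath (vert p)
      = ∑ i, ∑ j, cB i j • edgeLap i j := by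
    rw [part1]
    rw [show (1 / 2 : ℝ) • (∑ i, ∑ j, w i j • edgeLap i j) -
        ((∑ i, ∑ j, F i j • edgeLap i j) - (∑ i, ∑ j, D i j • edgeLap i j))
        = (1 / 2 : ℝ) • (∑ i, ∑ j, w i j • edgeLap i j) -
          (∑ i, ∑ j, F i j • edgeLap i j) + (∑ i, ∑ j, D i j • edgeLap i j) from by abel]
    simp only [hcB, Finset.smul_sum, smul_smul, add_smul, sub_smul,
      Finset.sum_sub_distrib, Finset.sum_add_distrib]
  rw [harg]
  apply lambda2_mono (herm_weighted D) (herm_weighted cB)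
  intro x
  rw [qf_weighted, qf_weighted]
  set g : Fin (n+2) → Fin (n+2) → ℝ := fun i j => (x i - x j) ^ 2 with hg
  have hswap : ∑ i, ∑ j, F j i * g i j = ∑ i, ∑ j, F i j * g i j := by
    rw [Finset.sum_comm]
    refine Finset.sum_congr rfl fun i _ => Finset.sum_congr rfl fun j _ => ?_
    rw [show g j i = g i j from by rw [hg]; ring]
  have hFw : (2:ℝ) * (∑ i, ∑ j, F i j * g i j) ≤ ∑ i, ∑ j, w i j * g i j := by
    have h1 : (2:ℝ) * (∑ i, ∑ j, F i j * g i j)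
        = ∑ i, ∑ j, (F i j + F j i) * g i j := by
      simp_rw [add_mul, Finset.sum_add_distrib, hswap]
      ring
    rw [h1]
    refine Finset.sum_le_sum fun i _ => Finset.sum_le_sum fun j _ => ?_
    exact mul_le_mul_of_nonneg_right (hcap i j) (sq_nonneg _)
  calc ∑ i, ∑ j, D i j * g i j
      ≤ ∑ i, ∑ j, D i j * g i j +
        ((∑ i, ∑ j, (1/2) * w i j * g i j) - ∑ i, ∑ j, F i j * g i j) := by
        have : ∑ i, ∑ j, (1/2) * w i j * g i j = (1/2) * ∑ i, ∑ j, w i j * g i j := by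
          simp_rw [Finset.mul_sum]
          exact Finset.sum_congr rfl fun i _ => Finset.sum_congr rfl fun j _ => by ring
        rw [this]
        linarith
    _ = ∑ i, ∑ j, cB i j * g i j := by
        simp only [hcB, add_mul, sub_mul, Finset.sum_sub_distrib, Finset.sum_add_distrib]
        ring
end

section
/- (Unsaturated case / flow-cut lemma) In the bidirectional max-flow setup on a directed graph G with edge weights w, vertex weights π, disjoint sets L, R with r = π(R)/π(L), source edges from s to each i ∈ L of capacity r·β·π(i), sink edges from each j ∈ R to t of capacity β·π(j), and internal edge capacities scaled by κ: if the maximum s-t flow value is strictly less than β·π(R), then the set S of vertices reachable from s after removing a minimum cut satisfies φ⃗_π(S) := w(δ⁺(S))/min{π(S), π(V∖S)} ≤ β·max{1,r}/κ. -/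
/-- Unsaturated case / flow-cut lemma: in the bidirectional
max-flow setup, if the minimum cut (source edges into `V_s ⊆ L`, sink edges from
`V_t ⊆ R`, internal edges `δ⁺(S)` scaled by `κ`) has total capacity strictly
less than `β·π(R)`, where `S` consists of the vertices reachable from `s`
(so `L ∖ V_s ⊆ S` and `R ∖ V_t ⊆ Sᶜ`), then
`φ⃗_π(S) = w(δ⁺(S)) / min(π(S), π(Sᶜ)) ≤ β·max(1, r)/κ` with `r = π(R)/π(L)`. -/
theorem stmt_12 {V : Type*} [Fintype V] [DecidableEq V]
    (w : V → V → ℝ) (hw : ∀ i j, 0 ≤ w i j)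
    (π : V → ℝ) (hπ : ∀ i, 0 < π i)
    (L R : Finset V) (hLR : Disjoint L R) (hL : L.Nonempty) (hR : R.Nonempty)
    (β κ : ℝ) (hβ : 0 < β) (hκ : 0 < κ)
    (r : ℝ) (hr : r = (∑ j ∈ R, π j) / (∑ i ∈ L, π i))
    (Vs : Finset V) (hVs : Vs ⊆ L) (Vt : Finset V) (hVt : Vt ⊆ R)
    (S : Finset V)
    (hcut : r * β * (∑ i ∈ Vs, π i) + β * (∑ j ∈ Vt, π j) +
        κ * (∑ i ∈ S, ∑ j ∈ Sᶜ, w i j) < β * ∑ j ∈ R, π j)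
    (hSL : L \ Vs ⊆ S) (hSR : R \ Vt ⊆ Sᶜ) :
    (∑ i ∈ S, ∑ j ∈ Sᶜ, w i j) / min (∑ i ∈ S, π i) (∑ i ∈ Sᶜ, π i)
      ≤ β * max 1 r / κ := by
  set W := ∑ i ∈ S, ∑ j ∈ Sᶜ, w i j with hWdef
  have hW : 0 ≤ W := Finset.sum_nonneg fun i _ =>
    Finset.sum_nonneg fun j _ => hw i j
  have hπL : 0 < ∑ i ∈ L, π i := Finset.sum_pos (fun i _ => hπ i) hL
  have hπR : 0 < ∑ j ∈ R, π j := Finset.sum_pos (fun i _ => hπ i) hR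
  have hr0 : 0 < r := by rw [hr]; positivity
  have hrL : r * ∑ i ∈ L, π i = ∑ j ∈ R, π j := by
    rw [hr]; field_simp
  have hβR : β * ∑ j ∈ R, π j = r * β * ∑ i ∈ L, π i := by
    rw [← hrL]; ring
  have hVs0 : 0 ≤ ∑ i ∈ Vs, π i :=
    Finset.sum_nonneg fun i _ => (hπ i).le
  have hVt0 : 0 ≤ ∑ j ∈ Vt, π j :=
    Finset.sum_nonneg fun i _ => (hπ i).le
  have hrβVs : 0 ≤ r * β * ∑ i ∈ Vs, π i :=
    mul_nonneg (mul_nonneg hr0.le hβ.le) hVs0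
  have hβVt : 0 ≤ β * ∑ j ∈ Vt, π j := mul_nonneg hβ.le hVt0
  have hκW : 0 ≤ κ * W := mul_nonneg hκ.le hW
  have hsdL : ∑ i ∈ L \ Vs, π i = (∑ i ∈ L, π i) - ∑ i ∈ Vs, π i :=
    Finset.sum_sdiff_eq_sub hVs
  have hsdR : ∑ i ∈ R \ Vt, π i = (∑ i ∈ R, π i) - ∑ i ∈ Vt, π i :=
    Finset.sum_sdiff_eq_sub hVt
  have hA : (∑ i ∈ L, π i) - ∑ i ∈ Vs, π i ≤ ∑ i ∈ S, π i := by
    rw [← hsdL]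
    exact Finset.sum_le_sum_of_subset_of_nonneg hSL fun i _ _ => (hπ i).le
  have hB : (∑ i ∈ R, π i) - ∑ i ∈ Vt, π i ≤ ∑ i ∈ Sᶜ, π i := by
    rw [← hsdR]
    exact Finset.sum_le_sum_of_subset_of_nonneg hSR fun i _ _ => (hπ i).le
  have hApos : 0 < ∑ i ∈ S, π i := by
    by_contra hx
    push_neg at hx
    nlinarith [mul_nonneg (mul_pos hr0 hβ).le (by linarith : 0 ≤ -((∑ i ∈ L, π i) - ∑ i ∈ Vs, π i))]
  have hBpos : 0 < ∑ i ∈ Sᶜ, π i := by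
    by_contra hx
    push_neg at hx
    nlinarith [mul_nonneg hβ.le (by linarith : 0 ≤ -((∑ i ∈ R, π i) - ∑ i ∈ Vt, π i))]
  have h1 : κ * W ≤ r * β * ∑ i ∈ S, π i := by
    nlinarith [mul_nonneg (mul_pos hr0 hβ).le (by linarith : 0 ≤ (∑ i ∈ S, π i) - ((∑ i ∈ L, π i) - ∑ i ∈ Vs, π i))]
  have h2 : κ * W ≤ β * ∑ i ∈ Sᶜ, π i := by
    nlinarith [mul_nonneg hβ.le (by linarith : 0 ≤ (∑ i ∈ Sᶜ, π i) - ((∑ i ∈ R, π i) - ∑ i ∈ Vt, π i))]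
  rw [div_le_div_iff₀ (lt_min hApos hBpos) hκ]
  rcases min_cases (∑ i ∈ S, π i) (∑ i ∈ Sᶜ, π i) with ⟨h, _⟩ | ⟨h, _⟩ <;> rw [h]
  · nlinarith [mul_nonneg (mul_nonneg hβ.le (sub_nonneg.2 (le_max_right 1 r))) hApos.le]
  · nlinarith [mul_nonneg (mul_nonneg hβ.le (sub_nonneg.2 (le_max_left 1 r))) hBpos.le]
end

section
/- Let H = (V, E, w) be an undirected hypergraph with π(i) = ∑_{e ∋ i} w(e). Then the reweighted eigenvalue program with ℓ₂² triangle inequalities λ^Δ_π(H) is a relaxation up to constants: λ^Δ_π(H) ≤ 2·φ_π(H), where φ_π(H) is the hypergraph conductance min over nonempty S ⊂ V of w(δ(S))/min{π(S), π(V∖S)} with δ(S) the set of hyperedges crossing S. -/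
noncomputable def singLM : ℝ →ₗ[ℝ] EuclideanSpace ℝ (Fin 1) where
  toFun t := EuclideanSpace.single 0 t
  map_add' a b := by
    ext j
    simp [EuclideanSpace.single_apply, PiLp.add_apply]; split <;> simp
  map_smul' c a := by
    ext j
    simp [EuclideanSpace.single_apply, PiLp.smul_apply, mul_ite]

theorem singLM_norm (t : ℝ) : ‖singLM t‖ = |t| := by
  simp [singLM, EuclideanSpace.norm_single]

set_option maxHeartbeats 1000000 in
/-- Easy direction for hypergraphs: for an undirected hypergraph
`H = (V, E, w)` with `π(i) = ∑_{e ∋ i} w(e)`, the reweighted eigenvalue program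
with ℓ₂² triangle inequalities is a relaxation up to constants:
`λ^Δ_π(H) ≤ 2·φ_π(H)`.  Formally: for every nonempty proper `S ⊂ V` there is a
feasible embedding whose objective against every feasible edge-constrained
circulation is at most `2·φ_π(S)`. -/
theorem stmt_13 {V : Type*} [Fintype V] [DecidableEq V]
    (E : Finset (Finset V)) (w : Finset V → ℝ) (hw : ∀ e ∈ E, 0 < w e)
    (π : V → ℝ) (hπdef : ∀ i, π i = ∑ e ∈ E.filter (fun e => i ∈ e), w e)
    (hπ : ∀ i, 0 < π i)
    (S : Finset V) (hS : S.Nonempty) (hS' : S ≠ Finset.univ) :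
    ∃ (m : ℕ) (v : V → EuclideanSpace ℝ (Fin m)),
      (∑ i, π i • v i = 0) ∧
      (∑ i, π i * ‖v i‖ ^ 2 = 1) ∧
      (∀ i j k, ‖v i - v k‖ ^ 2 ≤ ‖v i - v j‖ ^ 2 + ‖v j - v k‖ ^ 2) ∧
      ∀ Fe : Finset V → V → V → ℝ,
        (∀ e i j, 0 ≤ Fe e i j) →
        (∀ e ∈ E, ∀ i j : V, (i ∉ e ∨ j ∉ e) → Fe e i j = 0) →
        (∀ e ∈ E, ∑ i, ∑ j, Fe e i j ≤ w e) →
        (∀ j, ∑ i, ∑ e ∈ E, Fe e i j = ∑ k, ∑ e ∈ E, Fe e j k) →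
        (1 / 4) * ∑ i, ∑ j,
            ((∑ e ∈ E, Fe e i j) + ∑ e ∈ E, Fe e j i) * ‖v i - v j‖ ^ 2 ≤
          2 * ((∑ e ∈ E.filter
                  (fun e => (e ∩ S).Nonempty ∧ (e ∩ Sᶜ).Nonempty), w e) /
            min (∑ i ∈ S, π i) (∑ i ∈ Sᶜ, π i)) := by
  set a := ∑ i ∈ S, π i with ha_def
  set b := ∑ i ∈ Sᶜ, π i with hb_def
  have ha : 0 < a := Finset.sum_pos (fun i _ => hπ i) hS
  have hSc : Sᶜ.Nonempty := by
    rw [Finset.nonempty_iff_ne_empty]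
    intro h
    exact hS' ((Finset.compl_eq_empty_iff S).mp h)
  have hb : 0 < b := Finset.sum_pos (fun i _ => hπ i) hSc
  set c := Real.sqrt (b / (a * (a + b))) with hc_def
  set d := - Real.sqrt (a / (b * (a + b))) with hd_def
  have hc0 : 0 ≤ c := Real.sqrt_nonneg _
  have hd0 : d ≤ 0 := neg_nonpos.mpr (Real.sqrt_nonneg _)
  have hc2 : c ^ 2 = b / (a * (a + b)) := Real.sq_sqrt (by positivity)
  have hd2 : d ^ 2 = a / (b * (a + b)) := by
    rw [hd_def, neg_sq]; exact Real.sq_sqrt (by positivity)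
  have hcd : c * d = -(1 / (a + b)) := by
    rw [hc_def, hd_def, mul_neg, ← Real.sqrt_mul (by positivity)]
    rw [show b / (a * (a + b)) * (a / (b * (a + b))) = (1 / (a + b)) ^ 2 by
      field_simp]
    rw [Real.sqrt_sq (by positivity)]
  have hsum0 : a * c + b * d = 0 := by
    have key : (a * c) ^ 2 = (b * d) ^ 2 := by
      rw [mul_pow, mul_pow, hc2, hd2]; field_simp
    have h1 : |a * c| = |b * d| := by
      rw [← Real.sqrt_sq_eq_abs, ← Real.sqrt_sq_eq_abs, key]
    have h2 : 0 ≤ a * c := mul_nonneg ha.le hc0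
    have h3 : b * d ≤ 0 := mul_nonpos_of_nonneg_of_nonpos hb.le hd0
    rw [abs_of_nonneg h2, abs_of_nonpos h3] at h1
    linarith
  have hK : (c - d) ^ 2 = 1 / a + 1 / b := by
    have hexp : (c - d) ^ 2 = c ^ 2 - 2 * (c * d) + d ^ 2 := by ring
    rw [hexp, hc2, hd2, hcd]
    field_simp
    ring
  set x : V → ℝ := fun i => if i ∈ S then c else d with hx_def
  have hxS : ∀ i ∈ S, x i = c := fun i hi => by simp [hx_def, hi]
  have hxSc : ∀ i ∈ Sᶜ, x i = d := fun i hi => by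
    simp [hx_def, Finset.mem_compl.mp hi]
  have hnsub : ∀ p q : V, ‖singLM (x p) - singLM (x q)‖ ^ 2 = (x p - x q) ^ 2 :=
    fun p q => by rw [← map_sub, singLM_norm, sq_abs]
  have ht : ∀ p q : V, (x p - x q) ^ 2 ≤ (c - d) ^ 2 := by
    intro p q
    by_cases hp : p ∈ S <;> by_cases hq : q ∈ S <;>
      simp [hx_def, hp, hq] <;> nlinarith [sq_nonneg (c - d)]
  clear_value a b c d x
  refine ⟨1, fun i => singLM (x i), ?_, ?_, ?_, ?_⟩
  · have heq : ∑ i, π i • singLM (x i) = singLM (∑ i, π i * x i) := by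
      rw [map_sum]
      exact Finset.sum_congr rfl fun i _ => by rw [← smul_eq_mul, map_smul]
    rw [heq]
    have hsum : ∑ i, π i * x i = 0 := by
      rw [← Finset.sum_add_sum_compl S]
      have h1 : ∑ i ∈ S, π i * x i = a * c := by
        calc ∑ i ∈ S, π i * x i = ∑ i ∈ S, π i * c :=
              Finset.sum_congr rfl fun i hi => by rw [hxS i hi]
          _ = a * c := by rw [← Finset.sum_mul, ← ha_def]
      have h2 : ∑ i ∈ Sᶜ, π i * x i = b * d := by
        calc ∑ i ∈ Sᶜ, π i * x i = ∑ i ∈ Sᶜ, π i * d :=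
              Finset.sum_congr rfl fun i hi => by rw [hxSc i hi]
          _ = b * d := by rw [← Finset.sum_mul, ← hb_def]
      rw [h1, h2, hsum0]
    rw [hsum, map_zero]
  · simp_rw [singLM_norm, sq_abs]
    rw [← Finset.sum_add_sum_compl S]
    have h1 : ∑ i ∈ S, π i * x i ^ 2 = a * c ^ 2 := by
      calc ∑ i ∈ S, π i * x i ^ 2 = ∑ i ∈ S, π i * c ^ 2 :=
            Finset.sum_congr rfl fun i hi => by rw [hxS i hi]
        _ = a * c ^ 2 := by rw [← Finset.sum_mul, ← ha_def]
    have h2 : ∑ i ∈ Sᶜ, π i * x i ^ 2 = b * d ^ 2 := by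
      calc ∑ i ∈ Sᶜ, π i * x i ^ 2 = ∑ i ∈ Sᶜ, π i * d ^ 2 :=
            Finset.sum_congr rfl fun i hi => by rw [hxSc i hi]
        _ = b * d ^ 2 := by rw [← Finset.sum_mul, ← hb_def]
    rw [h1, h2, hc2, hd2]
    field_simp
    ring
  · intro i j k
    simp only [hnsub]
    by_cases hi : i ∈ S <;> by_cases hj : j ∈ S <;> by_cases hk : k ∈ S <;>
      simp [hx_def, hi, hj, hk] <;> nlinarith [sq_nonneg (c - d), sq_nonneg (d - c)]
  · intro Fe hF0 hFsupp hFcap _hFcons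
    set W := ∑ e ∈ E.filter (fun e => (e ∩ S).Nonempty ∧ (e ∩ Sᶜ).Nonempty), w e
      with hW_def
    have hW : 0 ≤ W :=
      Finset.sum_nonneg fun e he => (hw e (Finset.mem_filter.mp he).1).le
    clear_value W
    simp_rw [hnsub]
    have hrearr : ∑ i, ∑ j, ((∑ e ∈ E, Fe e i j) + ∑ e ∈ E, Fe e j i) *
        (x i - x j) ^ 2
        = ∑ e ∈ E, ∑ i, ∑ j, (Fe e i j + Fe e j i) * (x i - x j) ^ 2 := by
      simp_rw [← Finset.sum_add_distrib, Finset.sum_mul]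
      exact (Finset.sum_congr rfl fun i _ => Finset.sum_comm).trans Finset.sum_comm
    have hedge : ∀ e ∈ E, ∑ i, ∑ j, (Fe e i j + Fe e j i) * (x i - x j) ^ 2 ≤
        (if (e ∩ S).Nonempty ∧ (e ∩ Sᶜ).Nonempty then 2 * (w e * (c - d) ^ 2)
          else 0) := by
      intro e he
      by_cases hP : (e ∩ S).Nonempty ∧ (e ∩ Sᶜ).Nonempty
      · rw [if_pos hP]
        have step1 : ∑ i, ∑ j, (Fe e i j + Fe e j i) * (x i - x j) ^ 2 ≤
            ∑ i, ∑ j, (Fe e i j + Fe e j i) * (c - d) ^ 2 :=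
          Finset.sum_le_sum fun i _ => Finset.sum_le_sum fun j _ =>
            mul_le_mul_of_nonneg_left (ht i j) (add_nonneg (hF0 e i j) (hF0 e j i))
        have step2 : ∑ i, ∑ j, (Fe e i j + Fe e j i) * (c - d) ^ 2 =
            (∑ i, ∑ j, Fe e i j) * (c - d) ^ 2 * 2 := by
          have hsw : ∑ i, ∑ j, Fe e j i = ∑ i, ∑ j, Fe e i j := Finset.sum_comm
          simp_rw [add_mul, Finset.sum_add_distrib, ← Finset.sum_mul]
          rw [hsw]; ring
        have step3 := mul_le_mul_of_nonneg_right (hFcap e he) (sq_nonneg (c - d))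
        calc ∑ i, ∑ j, (Fe e i j + Fe e j i) * (x i - x j) ^ 2
            ≤ (∑ i, ∑ j, Fe e i j) * (c - d) ^ 2 * 2 := step1.trans_eq step2
          _ ≤ 2 * (w e * (c - d) ^ 2) := by linarith
      · rw [if_neg hP]
        have hzero : ∀ i j : V, (Fe e i j + Fe e j i) * (x i - x j) ^ 2 = 0 := by
          intro i j
          by_cases hx : x i = x j
          · rw [hx]; ring
          · have hij : i ∉ e ∨ j ∉ e := by
              by_contra hcon
              push_neg at hcon
              apply hP
              by_cases hi : i ∈ S <;> by_cases hj : j ∈ S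
              · exact absurd (by rw [hxS i hi, hxS j hj] : x i = x j) hx
              · exact ⟨⟨i, Finset.mem_inter.mpr ⟨hcon.1, hi⟩⟩,
                  ⟨j, Finset.mem_inter.mpr ⟨hcon.2, Finset.mem_compl.mpr hj⟩⟩⟩
              · exact ⟨⟨j, Finset.mem_inter.mpr ⟨hcon.2, hj⟩⟩,
                  ⟨i, Finset.mem_inter.mpr ⟨hcon.1, Finset.mem_compl.mpr hi⟩⟩⟩
              · exact absurd (by rw [hxSc i (Finset.mem_compl.mpr hi),
                    hxSc j (Finset.mem_compl.mpr hj)] : x i = x j) hx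
            have h1 : Fe e i j = 0 := hFsupp e he i j hij
            have h2 : Fe e j i = 0 := hFsupp e he j i (hij.symm)
            rw [h1, h2]; ring
        exact le_of_eq (Finset.sum_eq_zero fun i _ => Finset.sum_eq_zero fun j _ =>
          hzero i j)
    have hmain : ∑ i, ∑ j, ((∑ e ∈ E, Fe e i j) + ∑ e ∈ E, Fe e j i) *
        (x i - x j) ^ 2 ≤ 2 * (W * (c - d) ^ 2) := by
      rw [hrearr]
      calc ∑ e ∈ E, ∑ i, ∑ j, (Fe e i j + Fe e j i) * (x i - x j) ^ 2
          ≤ ∑ e ∈ E, (if (e ∩ S).Nonempty ∧ (e ∩ Sᶜ).Nonempty then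
              2 * (w e * (c - d) ^ 2) else 0) := Finset.sum_le_sum hedge
        _ = ∑ e ∈ E.filter (fun e => (e ∩ S).Nonempty ∧ (e ∩ Sᶜ).Nonempty),
              2 * (w e * (c - d) ^ 2) := by
              rw [Finset.sum_filter]
        _ = ∑ e ∈ E.filter (fun e => (e ∩ S).Nonempty ∧ (e ∩ Sᶜ).Nonempty),
              w e * (2 * (c - d) ^ 2) := Finset.sum_congr rfl fun e _ => by ring
        _ = W * (2 * (c - d) ^ 2) := by rw [hW_def, ← Finset.sum_mul]
        _ = 2 * (W * (c - d) ^ 2) := by ring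
    have hmin_pos : 0 < min a b := lt_min ha hb
    have h1 : 1 / a ≤ 1 / min a b :=
      one_div_le_one_div_of_le hmin_pos (min_le_left a b)
    have h2 : 1 / b ≤ 1 / min a b :=
      one_div_le_one_div_of_le hmin_pos (min_le_right a b)
    have hfin : (1 / 4 : ℝ) * (2 * (W * (c - d) ^ 2)) ≤ 2 * (W / min a b) := by
      have e1 : W * (1 / a) ≤ W * (1 / min a b) := mul_le_mul_of_nonneg_left h1 hW
      have e2 : W * (1 / b) ≤ W * (1 / min a b) := mul_le_mul_of_nonneg_left h2 hW
      have e3 : 0 ≤ W * (1 / min a b) :=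
        mul_nonneg hW (le_of_lt (by positivity : (0:ℝ) < 1 / min a b))
      have e4 : W / min a b = W * (1 / min a b) := by rw [mul_one_div]
      rw [hK, e4]
      nlinarith [e1, e2, e3]
    calc (1 / 4 : ℝ) * ∑ i, ∑ j, ((∑ e ∈ E, Fe e i j) + ∑ e ∈ E, Fe e j i) *
          (x i - x j) ^ 2
        ≤ (1 / 4) * (2 * (W * (c - d) ^ 2)) :=
          mul_le_mul_of_nonneg_left hmain (by norm_num)
      _ ≤ 2 * (W / min a b) := hfin
end

section
/- Let L, R ⊆ V be disjoint with weights π, r = π(R)/π(L), and let D be a directed fractional perfect matching between L and R: each i ∈ L has in-degree and out-degree exactly r·π(i) and each j ∈ R has in-degree and out-degree exactly π(j) (in the weighted Eulerian sense). Let x: V → ℝ with ∑_i π(i)·x(i) = 0, and suppose there is y ∈ ℝ with x(i) ≤ y for all i ∈ L and x(j) ≥ y for all j ∈ R, and r ≥ 1/3. Then ∑_{i∈L, j∈R} (D(i,j)+D(j,i))·(x(i)−x(j))² ≥ (2/3)·∑_i π(i)·x(i)². -/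
/-- for a directed fractional perfect matching `D` between a
partition `(L, R)` of `V` with ratio `r = π(R)/π(L) ≥ 1/3`, a centered function
`x` and a threshold `y` separating `x` on `L` from `x` on `R`,
`∑_{i∈L, j∈R} (D(i,j)+D(j,i))·(x(i)−x(j))² ≥ (2/3)·∑ π(i)·x(i)²`. -/
theorem stmt_14 {V : Type*} [Fintype V] [DecidableEq V]
    (π : V → ℝ) (hπ : ∀ i, 0 < π i)
    (L R : Finset V) (hLR : Disjoint L R) (hLR' : L ∪ R = Finset.univ)
    (r : ℝ) (hrdef : r = (∑ j ∈ R, π j) / (∑ i ∈ L, π i)) (hr : 1 / 3 ≤ r)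
    (D : V → V → ℝ) (hD : ∀ i j, 0 ≤ D i j)
    (hsupp : ∀ i j, D i j ≠ 0 → (i ∈ L ∧ j ∈ R) ∨ (i ∈ R ∧ j ∈ L))
    (hdegL : ∀ i ∈ L, (∑ j ∈ R, D i j = r * π i) ∧ (∑ j ∈ R, D j i = r * π i))
    (hdegR : ∀ j ∈ R, (∑ i ∈ L, D i j = π j) ∧ (∑ i ∈ L, D j i = π j))
    (x : V → ℝ) (hx : ∑ i, π i * x i = 0)
    (y : ℝ) (hyL : ∀ i ∈ L, x i ≤ y) (hyR : ∀ j ∈ R, y ≤ x j) :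
    (2 / 3) * ∑ i, π i * x i ^ 2 ≤
      ∑ i ∈ L, ∑ j ∈ R, (D i j + D j i) * (x i - x j) ^ 2 := by
  -- Step 1: pointwise bound
  have key : ∑ i ∈ L, ∑ j ∈ R, (D i j + D j i) * ((x i - y) ^ 2 + (x j - y) ^ 2)
      ≤ ∑ i ∈ L, ∑ j ∈ R, (D i j + D j i) * (x i - x j) ^ 2 := by
    refine Finset.sum_le_sum fun i hi => Finset.sum_le_sum fun j hj => ?_
    have h1 : 0 ≤ y - x i := sub_nonneg.2 (hyL i hi)
    have h2 : 0 ≤ x j - y := sub_nonneg.2 (hyR j hj)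
    have hd : 0 ≤ D i j + D j i := add_nonneg (hD i j) (hD j i)
    have hin : (x i - y) ^ 2 + (x j - y) ^ 2 ≤ (x i - x j) ^ 2 := by
      nlinarith [mul_nonneg h1 h2]
    exact mul_le_mul_of_nonneg_left hin hd
  -- Step 2: evaluate the middle sum
  have expand : ∑ i ∈ L, ∑ j ∈ R, (D i j + D j i) * ((x i - y) ^ 2 + (x j - y) ^ 2)
      = ∑ i ∈ L, 2 * r * π i * (x i - y) ^ 2 + ∑ j ∈ R, 2 * π j * (x j - y) ^ 2 := by
    have split : ∀ i ∈ L, ∀ j ∈ R, (D i j + D j i) * ((x i - y) ^ 2 + (x j - y) ^ 2)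
        = (D i j + D j i) * (x i - y) ^ 2 + (D i j + D j i) * (x j - y) ^ 2 := by
      intros; ring
    calc ∑ i ∈ L, ∑ j ∈ R, (D i j + D j i) * ((x i - y) ^ 2 + (x j - y) ^ 2)
        = ∑ i ∈ L, (∑ j ∈ R, (D i j + D j i) * (x i - y) ^ 2
            + ∑ j ∈ R, (D i j + D j i) * (x j - y) ^ 2) := by
          refine Finset.sum_congr rfl fun i hi => ?_
          rw [← Finset.sum_add_distrib]
          exact Finset.sum_congr rfl fun j hj => split i hi j hj
      _ = ∑ i ∈ L, ∑ j ∈ R, (D i j + D j i) * (x i - y) ^ 2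
            + ∑ i ∈ L, ∑ j ∈ R, (D i j + D j i) * (x j - y) ^ 2 :=
          Finset.sum_add_distrib
      _ = ∑ i ∈ L, 2 * r * π i * (x i - y) ^ 2 + ∑ j ∈ R, 2 * π j * (x j - y) ^ 2 := by
          congr 1
          · refine Finset.sum_congr rfl fun i hi => ?_
            rw [← Finset.sum_mul, Finset.sum_add_distrib, (hdegL i hi).1, (hdegL i hi).2]
            ring
          · rw [Finset.sum_comm]
            refine Finset.sum_congr rfl fun j hj => ?_
            rw [← Finset.sum_mul, Finset.sum_add_distrib, (hdegR j hj).1, (hdegR j hj).2]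
            ring
  -- Step 3: centering
  have centered : ∑ i, π i * x i ^ 2 ≤ ∑ i, π i * (x i - y) ^ 2 := by
    have he : ∑ i, π i * (x i - y) ^ 2
        = ∑ i, π i * x i ^ 2 - 2 * y * ∑ i, π i * x i + y ^ 2 * ∑ i, π i := by
      rw [Finset.mul_sum, Finset.mul_sum, ← Finset.sum_sub_distrib, ← Finset.sum_add_distrib]
      exact Finset.sum_congr rfl fun i _ => by ring
    have hπs : (0:ℝ) ≤ ∑ i, π i := Finset.sum_nonneg fun i _ => (hπ i).le
    rw [he, hx]
    nlinarith [sq_nonneg y]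
  -- Step 4: combine
  have hsplit : ∑ i, π i * (x i - y) ^ 2
      = ∑ i ∈ L, π i * (x i - y) ^ 2 + ∑ j ∈ R, π j * (x j - y) ^ 2 := by
    rw [← hLR', Finset.sum_union hLR]
  have h23 : (2/3 : ℝ) * ∑ i, π i * (x i - y) ^ 2
      ≤ ∑ i ∈ L, 2 * r * π i * (x i - y) ^ 2 + ∑ j ∈ R, 2 * π j * (x j - y) ^ 2 := by
    rw [hsplit, mul_add]
    refine add_le_add ?_ ?_
    · rw [Finset.mul_sum]
      refine Finset.sum_le_sum fun i _ => ?_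
      have : (0:ℝ) ≤ π i * (x i - y) ^ 2 := mul_nonneg (hπ i).le (sq_nonneg _)
      nlinarith
    · rw [Finset.mul_sum]
      refine Finset.sum_le_sum fun j _ => ?_
      have : (0:ℝ) ≤ π j * (x j - y) ^ 2 := mul_nonneg (hπ j).le (sq_nonneg _)
      nlinarith
  calc (2/3 : ℝ) * ∑ i, π i * x i ^ 2
      ≤ (2/3 : ℝ) * ∑ i, π i * (x i - y) ^ 2 := by linarith
    _ ≤ ∑ i ∈ L, 2 * r * π i * (x i - y) ^ 2 + ∑ j ∈ R, 2 * π j * (x j - y) ^ 2 := h23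
    _ = ∑ i ∈ L, ∑ j ∈ R, (D i j + D j i) * ((x i - y) ^ 2 + (x j - y) ^ 2) := expand.symm
    _ ≤ _ := key
end

section
/- Let G = (V, E, π) be a vertex-capacitated directed graph and construct G' = (V', E', w) with π' as follows: for each vertex i, create i_in and i_out with π'(i_in) = π(i) and π'(i_out) = δ for 0 < δ ≪ min_i π(i), an edge (i_in, i_out) with weight π(i); for each edge ij ∈ E, an edge (i_out, j_in) of weight M > ∑_i π(i). Then for every nonempty S ⊂ V there is a nonempty S' ⊂ V' with φ⃗_{π'}(S') ≤ C·ψ⃗_π(S) for an absolute constant C, where ψ⃗_π(S) = min{π(∂⁺(S)), π(∂⁺(V∖S))}/min{π(S), π(V∖S)} is the directed vertex expansion and φ⃗_{π'} is the directed edge expansion of G'. -/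
open Finset

private def el (V : Type) : V ↪ V ⊕ V := ⟨Sum.inl, Sum.inl_injective⟩
private def er (V : Type) : V ↪ V ⊕ V := ⟨Sum.inr, Sum.inr_injective⟩

private lemma compl_union_map {V : Type} [Fintype V] [DecidableEq V] (U T : Finset V) :
    (U.map (el V) ∪ T.map (er V))ᶜ = Uᶜ.map (el V) ∪ Tᶜ.map (er V) := by
  ext a
  rcases a with i | i <;> simp [el, er]

private lemma sum_union_map {V : Type} [Fintype V] [DecidableEq V] (U T : Finset V)
    (f : V ⊕ V → ℝ) :
    ∑ a ∈ (U.map (el V) ∪ T.map (er V)), f a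
      = ∑ i ∈ U, f (Sum.inl i) + ∑ i ∈ T, f (Sum.inr i) := by
  rw [Finset.sum_union, Finset.sum_map, Finset.sum_map]
  · rfl
  · simp [Finset.disjoint_left, el, er]

private lemma caseA_aux {V : Type} [Fintype V] [DecidableEq V]
    (π : V → ℝ) (hπ : ∀ i, 0 < π i)
    (w : V ⊕ V → V ⊕ V → ℝ) (π' : V ⊕ V → ℝ) (δ : ℝ) (hδ : 0 < δ)
    (hw1 : ∀ i j, w (Sum.inl i) (Sum.inl j) = 0)
    (hw2 : ∀ i j, w (Sum.inl i) (Sum.inr j) = if i = j then π i else 0)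
    (hπ'1 : ∀ i, π' (Sum.inl i) = π i) (hπ'2 : ∀ i, π' (Sum.inr i) = δ)
    (i j : V) (hji : j ≠ i) (hmin : ∀ k, π i ≤ π k) :
    ∃ S' : Finset (V ⊕ V), S'.Nonempty ∧ S' ≠ univ ∧
      min (∑ a ∈ S', ∑ b ∈ S'ᶜ, w a b) (∑ a ∈ S'ᶜ, ∑ b ∈ S', w a b) /
        min (∑ a ∈ S', π' a) (∑ a ∈ S'ᶜ, π' a) ≤ 1 := by
  refine ⟨{Sum.inl i}, singleton_nonempty _, ?_, ?_⟩
  · intro h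
    have : (Sum.inr i : V ⊕ V) ∈ ({Sum.inl i} : Finset (V ⊕ V)) := h ▸ mem_univ _
    simp at this
  · have htot : ∑ b, w (Sum.inl i) b = π i := by
      rw [Fintype.sum_sum_type]
      simp [hw1, hw2, Finset.sum_ite_eq]
    have hout : ∑ a ∈ ({Sum.inl i} : Finset (V ⊕ V)),
        ∑ b ∈ ({Sum.inl i} : Finset (V ⊕ V))ᶜ, w a b = π i := by
      rw [Finset.sum_singleton]
      have h := Finset.sum_compl_add_sum ({Sum.inl i} : Finset (V ⊕ V)) (w (Sum.inl i))
      rw [Finset.sum_singleton, hw1] at h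
      linarith
    have hd1 : ∑ a ∈ ({Sum.inl i} : Finset (V ⊕ V)), π' a = π i := by
      rw [Finset.sum_singleton, hπ'1]
    have hπ'nonneg : ∀ a : V ⊕ V, 0 ≤ π' a := by
      rintro (k | k)
      · rw [hπ'1]; exact (hπ k).le
      · rw [hπ'2]; exact hδ.le
    have hd2 : π i ≤ ∑ a ∈ ({Sum.inl i} : Finset (V ⊕ V))ᶜ, π' a := by
      have hj : (Sum.inl j : V ⊕ V) ∈ ({Sum.inl i} : Finset (V ⊕ V))ᶜ := by simp [hji]
      have h := Finset.single_le_sum (f := π') (fun a _ => hπ'nonneg a) hj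
      rw [hπ'1] at h
      exact (hmin j).trans h
    have hdm : min (∑ a ∈ ({Sum.inl i} : Finset (V ⊕ V)), π' a)
        (∑ a ∈ ({Sum.inl i} : Finset (V ⊕ V))ᶜ, π' a) = π i := by
      rw [hd1]; exact min_eq_left hd2
    rw [hdm, div_le_one (hπ i)]
    calc min (∑ a ∈ ({Sum.inl i} : Finset (V ⊕ V)), ∑ b ∈ ({Sum.inl i} : Finset (V ⊕ V))ᶜ, w a b)
          (∑ a ∈ ({Sum.inl i} : Finset (V ⊕ V))ᶜ, ∑ b ∈ ({Sum.inl i} : Finset (V ⊕ V)), w a b)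
        ≤ ∑ a ∈ ({Sum.inl i} : Finset (V ⊕ V)), ∑ b ∈ ({Sum.inl i} : Finset (V ⊕ V))ᶜ, w a b :=
          min_le_left _ _
      _ = π i := hout

private lemma caseB_aux {V : Type} [Fintype V] [DecidableEq V]
    (A : V → V → Prop) [DecidableRel A] (π : V → ℝ) (hπ : ∀ i, 0 < π i)
    (w : V ⊕ V → V ⊕ V → ℝ) (π' : V ⊕ V → ℝ) (δ : ℝ) (hδ : 0 < δ)
    (hw1 : ∀ i j, w (Sum.inl i) (Sum.inl j) = 0)
    (hw2 : ∀ i j, w (Sum.inl i) (Sum.inr j) = if i = j then π i else 0)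
    (hw3 : ∀ i j, ¬ A i j → w (Sum.inr i) (Sum.inl j) = 0)
    (hw4 : ∀ i j, w (Sum.inr i) (Sum.inr j) = 0)
    (hπ'1 : ∀ i, π' (Sum.inl i) = π i) (hπ'2 : ∀ i, π' (Sum.inr i) = δ)
    (T : Finset V) (hT : T.Nonempty) (hTc : Tᶜ.Nonempty)
    (D : ℝ) (hD : 0 < D)
    (hDT : D ≤ ∑ i ∈ T, π i) (hDTc : D ≤ ∑ i ∈ Tᶜ, π i)
    (hN : 2 * (∑ x ∈ univ.filter (fun x => x ∉ T ∧ ∃ u ∈ T, A u x), π x) < D) :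
    ∃ S' : Finset (V ⊕ V), S'.Nonempty ∧ S' ≠ univ ∧
      min (∑ a ∈ S', ∑ b ∈ S'ᶜ, w a b) (∑ a ∈ S'ᶜ, ∑ b ∈ S', w a b) /
        min (∑ a ∈ S', π' a) (∑ a ∈ S'ᶜ, π' a)
      ≤ 2 * ((∑ x ∈ univ.filter (fun x => x ∉ T ∧ ∃ u ∈ T, A u x), π x) / D) := by
  classical
  set Nb := univ.filter (fun x => x ∉ T ∧ ∃ u ∈ T, A u x) with hNb
  set U := T ∪ Nb with hU
  set Sp := U.map (el V) ∪ T.map (er V) with hSp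
  have hNbTc : Nb ⊆ Tᶜ := by
    intro z hz
    rw [hNb, mem_filter] at hz
    simp [hz.2.1]
  have hUc : Uᶜ = Tᶜ \ Nb := by
    ext z
    simp only [hU, mem_compl, mem_union, mem_sdiff, not_or]
  refine ⟨Sp, ?_, ?_, ?_⟩
  · obtain ⟨z, hz⟩ := hT
    exact ⟨Sum.inr z, by simp [hSp, er, hz]⟩
  · obtain ⟨z, hz⟩ := hTc
    intro h
    have hmem : (Sum.inr z : V ⊕ V) ∈ Sp := h ▸ mem_univ _
    rw [hSp] at hmem
    simp [el, er] at hmem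
    exact (mem_compl.mp hz) hmem
  · -- cut computation
    have hcut : ∑ a ∈ Sp, ∑ b ∈ Spᶜ, w a b = ∑ z ∈ Nb, π z := by
      rw [hSp, compl_union_map, sum_union_map]
      have h1 : ∀ i ∈ U, ∑ b ∈ (Uᶜ.map (el V) ∪ Tᶜ.map (er V)), w (Sum.inl i) b
          = if i ∈ Tᶜ then π i else 0 := by
        intro i _
        rw [sum_union_map]
        simp [hw1, hw2, Finset.sum_ite_eq]
      have h2 : ∀ i ∈ T, ∑ b ∈ (Uᶜ.map (el V) ∪ Tᶜ.map (er V)), w (Sum.inr i) b = 0 := by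
        intro i hi
        rw [sum_union_map]
        have hz : ∀ j ∈ Uᶜ, w (Sum.inr i) (Sum.inl j) = 0 := by
          intro j hj
          apply hw3
          intro hA
          have hjU : j ∈ U := by
            rw [hU]
            by_cases hjT : j ∈ T
            · exact mem_union_left _ hjT
            · refine mem_union_right _ ?_
              rw [hNb, mem_filter]
              exact ⟨mem_univ _, hjT, i, hi, hA⟩
          exact (mem_compl.mp hj) hjU
        rw [Finset.sum_eq_zero hz]
        simp [hw4]
      rw [Finset.sum_congr rfl h1, Finset.sum_congr rfl h2,
        Finset.sum_const_zero, add_zero, Finset.sum_ite_mem]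
      congr 1
      ext z
      simp only [hU, mem_inter, mem_union, mem_compl]
      constructor
      · rintro ⟨h | h, hnT⟩
        · exact absurd h hnT
        · exact h
      · intro h
        exact ⟨Or.inr h, mem_compl.mp (hNbTc h)⟩
    have hd1 : ∑ a ∈ Sp, π' a = ∑ i ∈ U, π i + ∑ i ∈ T, δ := by
      rw [hSp, sum_union_map]
      simp [hπ'1, hπ'2]
    have hd2 : ∑ a ∈ Spᶜ, π' a = ∑ i ∈ Uᶜ, π i + ∑ i ∈ Tᶜ, δ := by
      rw [hSp, compl_union_map, sum_union_map]
      simp [hπ'1, hπ'2]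
    have hNnonneg : (0:ℝ) ≤ ∑ z ∈ Nb, π z := sum_nonneg fun z _ => (hπ z).le
    have hTU : ∑ i ∈ T, π i ≤ ∑ i ∈ U, π i :=
      sum_le_sum_of_subset_of_nonneg (by rw [hU]; exact subset_union_left)
        (fun i _ _ => (hπ i).le)
    have hUcsum : ∑ i ∈ Uᶜ, π i = ∑ i ∈ Tᶜ, π i - ∑ z ∈ Nb, π z := by
      rw [hUc, Finset.sum_sdiff_eq_sub hNbTc]
    have hδT : (0:ℝ) ≤ ∑ _i ∈ T, δ := sum_nonneg fun _ _ => hδ.le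
    have hδTc : (0:ℝ) ≤ ∑ _i ∈ Tᶜ, δ := sum_nonneg fun _ _ => hδ.le
    have hdm1 : D / 2 ≤ ∑ a ∈ Sp, π' a := by rw [hd1]; linarith
    have hdm2 : D / 2 ≤ ∑ a ∈ Spᶜ, π' a := by rw [hd2, hUcsum]; linarith
    have hdm : D / 2 ≤ min (∑ a ∈ Sp, π' a) (∑ a ∈ Spᶜ, π' a) := le_min hdm1 hdm2
    have hdmpos : 0 < min (∑ a ∈ Sp, π' a) (∑ a ∈ Spᶜ, π' a) :=
      lt_of_lt_of_le (half_pos hD) hdm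
    calc min (∑ a ∈ Sp, ∑ b ∈ Spᶜ, w a b) (∑ a ∈ Spᶜ, ∑ b ∈ Sp, w a b) /
          min (∑ a ∈ Sp, π' a) (∑ a ∈ Spᶜ, π' a)
        ≤ (∑ z ∈ Nb, π z) / min (∑ a ∈ Sp, π' a) (∑ a ∈ Spᶜ, π' a) := by
          apply div_le_div_of_nonneg_right ?_ hdmpos.le
          calc min (∑ a ∈ Sp, ∑ b ∈ Spᶜ, w a b) (∑ a ∈ Spᶜ, ∑ b ∈ Sp, w a b)
              ≤ ∑ a ∈ Sp, ∑ b ∈ Spᶜ, w a b := min_le_left _ _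
            _ = ∑ z ∈ Nb, π z := hcut
      _ ≤ (∑ z ∈ Nb, π z) / (D / 2) :=
          div_le_div_of_nonneg_left hNnonneg (half_pos hD) hdm
      _ = 2 * ((∑ z ∈ Nb, π z) / D) := by
          rw [div_div_eq_mul_div]
          ring

/-- Reduction from directed vertex expansion to directed edge
expansion: there is an absolute constant `C > 0` such that for every
vertex-capacitated directed graph `G = (V, E, π)`, the split graph `G'` on
`V ⊕ V` (with `inl i = i_in`, `inr i = i_out`, internal edges `(i_in, i_out)` of
weight `π(i)`, edges `(i_out, j_in)` of weight `M` for `ij ∈ E`, and vertex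
weights `π'(i_in) = π(i)`, `π'(i_out) = δ`) satisfies: for every nonempty proper
`S ⊂ V` there is a nonempty proper `S' ⊂ V ⊕ V` with
`φ⃗_{π'}(S') ≤ C · ψ⃗_π(S)`. -/
theorem stmt_16 :
    ∃ C : ℝ, 0 < C ∧
    ∀ (V : Type) [Fintype V] [DecidableEq V]
      (A : V → V → Prop) [DecidableRel A]
      (π : V → ℝ), (∀ i, 0 < π i) →
    ∀ δ M : ℝ, 0 < δ → (∀ i, δ ≤ π i) → (∑ i, π i) < M →
    let w' : V ⊕ V → V ⊕ V → ℝ := fun a b =>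
      match a, b with
      | Sum.inl i, Sum.inr i' => if i = i' then π i else 0
      | Sum.inr i, Sum.inl j => if A i j then M else 0
      | _, _ => 0
    let π' : V ⊕ V → ℝ := Sum.elim π fun _ => δ
    let outNbr : Finset V → Finset V := fun S =>
      Finset.univ.filter fun x => x ∉ S ∧ ∃ u ∈ S, A u x
    ∀ S : Finset V, S.Nonempty → S ≠ Finset.univ →
    ∃ S' : Finset (V ⊕ V), S'.Nonempty ∧ S' ≠ Finset.univ ∧
      min (∑ a ∈ S', ∑ b ∈ S'ᶜ, w' a b) (∑ a ∈ S'ᶜ, ∑ b ∈ S', w' a b) /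
          min (∑ a ∈ S', π' a) (∑ a ∈ S'ᶜ, π' a)
        ≤ C * (min (∑ x ∈ outNbr S, π x) (∑ x ∈ outNbr Sᶜ, π x) /
            min (∑ i ∈ S, π i) (∑ i ∈ Sᶜ, π i)) := by
  refine ⟨2, by norm_num, ?_⟩
  intro V _ _ A _ π hπ δ M hδ hδπ hM
  intro w' π' outNbr S hS hSne
  classical
  obtain ⟨x, hx⟩ := hS
  have hScne : Sᶜ.Nonempty := by
    by_contra h
    rw [Finset.not_nonempty_iff_eq_empty, Finset.compl_eq_empty_iff] at h
    exact hSne h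
  obtain ⟨y, hy⟩ := hScne
  set N := min (∑ x ∈ outNbr S, π x) (∑ x ∈ outNbr Sᶜ, π x) with hNdef
  set D := min (∑ i ∈ S, π i) (∑ i ∈ Sᶜ, π i) with hDdef
  have hD0 : 0 < D :=
    lt_min (Finset.sum_pos (fun i _ => hπ i) ⟨x, hx⟩)
      (Finset.sum_pos (fun i _ => hπ i) ⟨y, hy⟩)
  by_cases hc : D ≤ 2 * N
  · -- case A : expansion ≥ 1/2, use a minimal singleton
    obtain ⟨i, -, hi⟩ := Finset.exists_min_image univ π ⟨x, mem_univ x⟩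
    have hji : ∃ j, j ≠ i := by
      rcases eq_or_ne x i with h | h
      · exact ⟨y, fun hyi => Finset.mem_compl.mp hy (by rw [hyi, ← h]; exact hx)⟩
      · exact ⟨x, h⟩
    obtain ⟨j, hj⟩ := hji
    obtain ⟨S', h1, h2, h3⟩ := caseA_aux π hπ w' π' δ hδ
      (fun _ _ => rfl) (fun _ _ => rfl) (fun _ => rfl) (fun _ => rfl)
      i j hj (fun k => hi k (mem_univ k))
    refine ⟨S', h1, h2, ?_⟩
    have h1' : (1:ℝ) ≤ 2 * (N / D) := by
      rw [mul_div_assoc', le_div_iff₀ hD0]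
      linarith
    exact h3.trans h1'
  · push_neg at hc
    rcases le_total (∑ x ∈ outNbr S, π x) (∑ x ∈ outNbr Sᶜ, π x) with hle | hle
    · have hNeq : N = ∑ x ∈ outNbr S, π x := min_eq_left hle
      obtain ⟨S', h1, h2, h3⟩ := caseB_aux A π hπ w' π' δ hδ
        (fun _ _ => rfl) (fun _ _ => rfl) (fun _ _ h => if_neg h) (fun _ _ => rfl)
        (fun _ => rfl) (fun _ => rfl)
        S ⟨x, hx⟩ ⟨y, hy⟩ D hD0 (min_le_left _ _) (min_le_right _ _)
        (by rw [hNeq] at hc; exact hc)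
      refine ⟨S', h1, h2, ?_⟩
      rw [hNeq]
      exact h3
    · have hNeq : N = ∑ x ∈ outNbr Sᶜ, π x := min_eq_right hle
      obtain ⟨S', h1, h2, h3⟩ := caseB_aux A π hπ w' π' δ hδ
        (fun _ _ => rfl) (fun _ _ => rfl) (fun _ _ h => if_neg h) (fun _ _ => rfl)
        (fun _ => rfl) (fun _ => rfl)
        Sᶜ ⟨y, hy⟩ (by rw [compl_compl]; exact ⟨x, hx⟩) D hD0 (min_le_right _ _)
        (by rw [compl_compl]; exact min_le_left _ _)
        (by rw [hNeq] at hc; exact hc)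
      refine ⟨S', h1, h2, ?_⟩
      rw [hNeq]
      exact h3
end

section
/- Let Mₜ, t = 0,…,T−1 be symmetric matrices with 0 ⪯ Mₜ and ‖Mₜ‖ ≤ ρ, and let Xₜ be the density matrices from the matrix multiplicative weight update rule X_{t+1} ∝ exp(−(η/ρ)∑_{i=0}^{t} M_i) with X₀ = I/n and step size η ∈ (0,1). Then λ_min((1/T)∑_{t=0}^{T−1} Mₜ) ≥ c·((1−η)·(1/T)∑_{t=0}^{T−1} ⟨Mₜ, Xₜ⟩ − (ρ·log n)/(η·T)) for an absolute constant c > 0. -/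
/-- The ℓ₂→ℓ₂ operator (spectral) norm of a real matrix. -/
noncomputable def specNorm {n : ℕ} (M : Matrix (Fin n) (Fin n) ℝ) : ℝ :=
  ‖(Matrix.toEuclideanCLM (𝕜 := ℝ) M : EuclideanSpace ℝ (Fin n) →L[ℝ] EuclideanSpace ℝ (Fin n))‖

/-- The minimum eigenvalue of a symmetric matrix. -/
noncomputable def lambdaMin {n : ℕ} (M : Matrix (Fin (n + 1)) (Fin (n + 1)) ℝ) : ℝ :=
  if h : M.IsHermitian then Finset.univ.inf' Finset.univ_nonempty h.eigenvalues else 0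

namespace Stmt17Aux

open Matrix NormedSpace

variable {N : ℕ}

abbrev Mat (N : ℕ) := Matrix (Fin N) (Fin N) ℝ

lemma star_mul_entry (P Q : Mat N) (i j : Fin N) :
    (star Q * P) j i = (star P * Q) i j := by
  simp [Matrix.mul_apply, Matrix.star_apply, mul_comm]

/-- spectral decomposition -/
lemma decomp {A : Mat N} (hA : A.IsHermitian) :
    ∃ Q : Mat N, Q * star Q = 1 ∧ star Q * Q = 1 ∧
      A = Q * Matrix.diagonal hA.eigenvalues * star Q := by
  refine ⟨hA.eigenvectorUnitary, ?_, ?_, ?_⟩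
  · exact (Matrix.mem_unitaryGroup_iff).mp hA.eigenvectorUnitary.2
  · exact (Matrix.mem_unitaryGroup_iff').mp hA.eigenvectorUnitary.2
  · have := hA.spectral_theorem
    simpa using this

lemma exp_conj_diag (Q : Mat N) (h1 : Q * star Q = 1) (h2 : star Q * Q = 1) (d : Fin N → ℝ) :
    exp (Q * Matrix.diagonal d * star Q)
      = Q * Matrix.diagonal (fun i => Real.exp (d i)) * star Q := by
  let U : (Mat N)ˣ := ⟨Q, star Q, h1, h2⟩
  have h := Matrix.exp_units_conj U (Matrix.diagonal d)
  have hinv : ((U⁻¹ : (Mat N)ˣ) : Mat N) = star Q := rfl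
  have hU : ((U : (Mat N)ˣ) : Mat N) = Q := rfl
  rw [hinv, hU] at h
  rw [h, Matrix.exp_diagonal]
  have hd : exp d = fun i => Real.exp (d i) := by
    rw [Pi.exp_def]
    funext i
    exact (congrFun Real.exp_eq_exp_ℝ (d i)).symm
  rw [hd]

lemma trace_eq_double (A B : Mat N) :
    Matrix.trace (A * B) = ∑ i, ∑ j, A i j * B j i := by
  simp [Matrix.trace, Matrix.diag, Matrix.mul_apply]

lemma atom (P Q : Mat N) (a b : Fin N → ℝ) :
    Matrix.trace ((P * Matrix.diagonal a * star P) * (Q * Matrix.diagonal b * star Q))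
      = ∑ i, ∑ j, a i * b j * ((star P * Q) i j)^2 := by
  have h1 : (P * Matrix.diagonal a * star P) * (Q * Matrix.diagonal b * star Q)
      = P * ((Matrix.diagonal a * ((star P * Q) * Matrix.diagonal b)) * star Q) := by
    noncomm_ring
  rw [h1, Matrix.trace_mul_comm, Matrix.mul_assoc, trace_eq_double]
  refine Finset.sum_congr rfl fun i _ => Finset.sum_congr rfl fun j _ => ?_
  rw [Matrix.diagonal_mul, Matrix.mul_diagonal, star_mul_entry]
  ring

lemma rowsum (P Q : Mat N) (h1 : P * star P = 1) (h2 : Q * star Q = 1) (i : Fin N) :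
    ∑ j, ((star P * Q) i j)^2 = 1 := by
  have hP' : star P * P = 1 := mul_eq_one_comm.mp h1
  have key : (star P * Q) * star (star P * Q) = 1 := by
    rw [Matrix.star_mul, star_star, Matrix.mul_assoc, ← Matrix.mul_assoc Q, h2,
      Matrix.one_mul, hP']
  have e : ((star P * Q) * star (star P * Q)) i i = (1 : Mat N) i i := by rw [key]
  simp only [Matrix.mul_apply, Matrix.star_apply, star_trivial, Matrix.one_apply_eq] at e
  rw [← e]
  exact Finset.sum_congr rfl fun j _ => (sq _)

lemma colsum (P Q : Mat N) (h1 : P * star P = 1) (h2 : star Q * Q = 1) (j : Fin N) :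
    ∑ i, ((star P * Q) i j)^2 = 1 := by
  have key : star (star P * Q) * (star P * Q) = 1 := by
    rw [Matrix.star_mul, star_star, Matrix.mul_assoc, ← Matrix.mul_assoc P, h1,
      Matrix.one_mul, h2]
  have e : (star (star P * Q) * (star P * Q)) j j = (1 : Mat N) j j := by rw [key]
  simp only [Matrix.mul_apply, Matrix.star_apply, star_trivial, Matrix.one_apply_eq] at e
  rw [← e]
  exact Finset.sum_congr rfl fun i _ => (sq _)

lemma trace_conj (Q : Mat N) (h2 : star Q * Q = 1) (D : Mat N) :
    Matrix.trace (Q * D * star Q) = Matrix.trace D := by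
  rw [Matrix.trace_mul_comm, ← Matrix.mul_assoc, h2, Matrix.one_mul]

lemma conj_diag_mul (Q : Mat N) (h2 : star Q * Q = 1) (a b : Fin N → ℝ) :
    (Q * Matrix.diagonal a * star Q) * (Q * Matrix.diagonal b * star Q)
      = Q * Matrix.diagonal (fun i => a i * b i) * star Q := by
  have : Q * Matrix.diagonal a * star Q * (Q * Matrix.diagonal b * star Q)
      = Q * (Matrix.diagonal a * (star Q * Q) * Matrix.diagonal b) * star Q := by
    noncomm_ring
  rw [this, h2, Matrix.mul_one, Matrix.diagonal_mul_diagonal]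

lemma psd_conj (Q : Mat N) {d : Fin N → ℝ} (hd : ∀ i, 0 ≤ d i) :
    (Q * Matrix.diagonal d * star Q).PosSemidef := by
  have h := (Matrix.PosSemidef.diagonal (R := ℝ) (n := Fin N) hd).mul_mul_conjTranspose_same Q
  simpa [Matrix.star_eq_conjTranspose] using h

lemma psd_trace_nonneg {A : Mat N} (hA : A.PosSemidef) : 0 ≤ Matrix.trace A := by
  exact hA.trace_nonneg

lemma psd_trace_mul_nonneg {A B : Mat N} (hA : A.PosSemidef) (hB : B.PosSemidef) :
    0 ≤ Matrix.trace (A * B) := by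
  obtain ⟨C, rfl⟩ : ∃ C : Mat N, B = Cᴴ * C := by
    obtain ⟨Q, h1, h2, hrep⟩ := decomp hB.1
    refine ⟨Matrix.diagonal (fun i => Real.sqrt (hB.1.eigenvalues i)) * star Q, ?_⟩
    rw [Matrix.conjTranspose_mul, Matrix.diagonal_conjTranspose, ← Matrix.star_eq_conjTranspose,
      star_star, Matrix.mul_assoc, ← Matrix.mul_assoc (Matrix.diagonal _),
      Matrix.diagonal_mul_diagonal, ← Matrix.mul_assoc]
    conv_lhs => rw [hrep]
    congr 3
    funext i
    simp [Real.mul_self_sqrt (hB.eigenvalues_nonneg i)]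
  have h : Matrix.trace (A * (Cᴴ * C)) = Matrix.trace (C * A * Cᴴ) := by
    rw [← Matrix.mul_assoc, Matrix.trace_mul_comm, ← Matrix.mul_assoc]
  rw [h]
  exact psd_trace_nonneg (hA.mul_mul_conjTranspose_same C)



lemma scalar_neg {d : ℝ} (hd : d ≤ 0) : Real.exp d ≤ 1 + d + d^2/2 := by
  set y := -d with hy
  have hy0 : 0 ≤ y := by linarith
  have h1 : 1 + y + y^2/2 ≤ Real.exp y := by
    have h := Real.sum_le_exp_of_nonneg hy0 3
    simp [Finset.sum_range_succ] at h
    nlinarith [h]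
  have hq : (0:ℝ) ≤ 1 - y + y^2/2 := by nlinarith [sq_nonneg (y-1)]
  have hprod : Real.exp y * Real.exp d = 1 := by
    rw [← Real.exp_add]; simp [hy]
  nlinarith [Real.exp_pos y, Real.exp_pos d, mul_le_mul_of_nonneg_left h1 hq]

lemma scalar_pos {d : ℝ} (hd : 0 ≤ d) : Real.exp d - 1 - d ≤ d^2/2 * Real.exp d := by
  have hmono : ∀ t ∈ Set.Icc (0:ℝ) d, Real.exp t - 1 ≤ t * Real.exp d := by
    intro t ht
    have h1 : Real.exp (-t) * Real.exp t = 1 := by rw [← Real.exp_add]; simp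
    have h2 : (1 - t) * Real.exp t ≤ 1 := by
      nlinarith [Real.add_one_le_exp (-t), Real.exp_pos t]
    have h3 : t * Real.exp t ≤ t * Real.exp d :=
      mul_le_mul_of_nonneg_left (Real.exp_le_exp.mpr ht.2) ht.1
    nlinarith
  have hi1 : IntervalIntegrable (fun t => Real.exp t - 1) MeasureTheory.volume 0 d :=
    (Real.continuous_exp.sub continuous_const).intervalIntegrable _ _
  have hi2 : IntervalIntegrable (fun t => t * Real.exp d) MeasureTheory.volume 0 d :=
    (continuous_id.mul continuous_const).intervalIntegrable _ _
  have hmain := intervalIntegral.integral_mono_on hd hi1 hi2 hmono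
  have e1 : ∫ t in (0:ℝ)..d, (Real.exp t - 1) = Real.exp d - 1 - d := by
    rw [intervalIntegral.integral_sub ((Real.continuous_exp).intervalIntegrable _ _)
      (continuous_const.intervalIntegrable _ _)]
    rw [integral_exp, intervalIntegral.integral_const]
    simp
  have e2 : ∫ t in (0:ℝ)..d, t * Real.exp d = d^2/2 * Real.exp d := by
    rw [intervalIntegral.integral_mul_const, integral_id]
    ring
  rw [e1, e2] at hmain
  exact hmain

lemma scalarKey (l m : ℝ) :
    Real.exp l ≤ Real.exp m + (l-m)*Real.exp m + (l-m)^2/2*Real.exp m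
      + (l-m)^2/2*Real.exp l := by
  set d := l - m with hdd
  have hprod : Real.exp m * Real.exp d = Real.exp l := by
    rw [← Real.exp_add]; congr 1; ring
  rcases le_or_gt d 0 with hd | hd
  · have h := scalar_neg hd
    have h2 : (0:ℝ) ≤ (l-m)^2/2*Real.exp l := by positivity
    nlinarith [Real.exp_pos m]
  · have h := scalar_pos hd.le
    -- exp d - 1 - d ≤ d^2/2 exp d ; multiply by exp m > 0
    nlinarith [Real.exp_pos m, Real.exp_pos d, mul_le_mul_of_nonneg_left h (Real.exp_pos m).le]

lemma scalarK1 (l m : ℝ) : (m - l) * Real.exp l ≤ Real.exp m - Real.exp l := by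
  have h1 : Real.exp (m - l) * Real.exp l = Real.exp m := by
    rw [← Real.exp_add]; congr 1; ring
  nlinarith [Real.add_one_le_exp (m - l), Real.exp_pos l]






lemma atom_swap (P Q : Mat N) (a b : Fin N → ℝ) :
    Matrix.trace ((Q * Matrix.diagonal a * star Q) * (P * Matrix.diagonal b * star P))
      = ∑ i, ∑ j, a j * b i * ((star P * Q) i j)^2 := by
  rw [atom Q P a b, Finset.sum_comm]
  exact Finset.sum_congr rfl fun i _ => Finset.sum_congr rfl fun j _ => by
    rw [star_mul_entry]

lemma dsum_add (f g : Fin N → Fin N → ℝ) :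
    (∑ i, ∑ j, f i j) + (∑ i, ∑ j, g i j) = ∑ i, ∑ j, (f i j + g i j) := by
  rw [← Finset.sum_add_distrib]
  exact Finset.sum_congr rfl fun i _ => (Finset.sum_add_distrib).symm

lemma dsum_sub (f g : Fin N → Fin N → ℝ) :
    (∑ i, ∑ j, f i j) - (∑ i, ∑ j, g i j) = ∑ i, ∑ j, (f i j - g i j) := by
  rw [← Finset.sum_sub_distrib]
  exact Finset.sum_congr rfl fun i _ => (Finset.sum_sub_distrib _ _).symm

lemma dsum_le (f g : Fin N → Fin N → ℝ) (h : ∀ i j, f i j ≤ g i j) :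
    (∑ i, ∑ j, f i j) ≤ ∑ i, ∑ j, g i j :=
  Finset.sum_le_sum fun i _ => Finset.sum_le_sum fun j _ => h i j

lemma dsum_div2 (f : Fin N → Fin N → ℝ) :
    (∑ i, ∑ j, f i j)/2 = ∑ i, ∑ j, f i j / 2 := by
  rw [Finset.sum_div]
  exact Finset.sum_congr rfl fun i _ => Finset.sum_div _ _ _

/-- The key one-step inequality (second-order Klein bound). -/
lemma step (G B : Mat N) (hG : G.IsHermitian) (hB : B.PosSemidef) {η : ℝ}
    (hη0 : 0 ≤ η) (hB2 : (η • B - B * B).PosSemidef) :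
    Matrix.trace (exp (-(G + B))) ≤ Matrix.trace (exp (-G))
      - (2 - η)/(2 + η) * Matrix.trace (B * exp (-G)) := by
  have hU : (-(G + B)).IsHermitian := (hG.add hB.1).neg
  have hV : (-G).IsHermitian := hG.neg
  obtain ⟨P, hP1, hP2, hPU⟩ := decomp hU
  obtain ⟨Q, hQ1, hQ2, hQV⟩ := decomp hV
  set lam := hU.eigenvalues with hlam
  set mu := hV.eigenvalues with hmu
  set w : Fin N → Fin N → ℝ := fun i j => ((star P * Q) i j)^2 with hw
  have hwpos : ∀ i j, 0 ≤ w i j := fun i j => sq_nonneg _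
  have hrow : ∀ i, ∑ j, w i j = 1 := fun i => by
    simp only [hw]; exact rowsum P Q hP1 hQ1 i
  have hcol : ∀ j, ∑ i, w i j = 1 := fun j => by
    simp only [hw]; exact colsum P Q hP1 hQ2 j
  have rowExpand : ∀ f : Fin N → ℝ, (∑ i, f i) = ∑ i, ∑ j, w i j * f i := by
    intro f
    refine Finset.sum_congr rfl fun i _ => ?_
    rw [← Finset.sum_mul, hrow i, one_mul]
  have colExpand : ∀ f : Fin N → ℝ, (∑ j, f j) = ∑ i, ∑ j, w i j * f j := by
    intro f
    rw [Finset.sum_comm]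
    refine Finset.sum_congr rfl fun j _ => ?_
    rw [← Finset.sum_mul, hcol j, one_mul]
  have hEU : exp (-(G + B)) = P * Matrix.diagonal (fun i => Real.exp (lam i)) * star P := by
    rw [hPU, exp_conj_diag P hP1 hP2]
  have hEV : exp (-G) = Q * Matrix.diagonal (fun i => Real.exp (mu i)) * star Q := by
    rw [hQV, exp_conj_diag Q hQ1 hQ2]
  have hBeq' : (-G) - (-(G + B)) = B := by abel
  -- basic trace formulas
  have T_eU : Matrix.trace (exp (-(G + B))) = ∑ i, ∑ j, w i j * Real.exp (lam i) := by
    rw [hEU, trace_conj P hP2, Matrix.trace_diagonal, rowExpand]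
  have T_eV : Matrix.trace (exp (-G)) = ∑ i, ∑ j, w i j * Real.exp (mu j) := by
    rw [hEV, trace_conj Q hQ2, Matrix.trace_diagonal, colExpand]
  have T_UeV : Matrix.trace ((-(G + B)) * exp (-G))
      = ∑ i, ∑ j, w i j * (lam i * Real.exp (mu j)) := by
    rw [hEV, hPU, atom]
    refine Finset.sum_congr rfl fun i _ => Finset.sum_congr rfl fun j _ => ?_
    simp only [hw]; all_goals ring
  have T_VeV : Matrix.trace ((-G) * exp (-G))
      = ∑ i, ∑ j, w i j * (mu j * Real.exp (mu j)) := by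
    rw [hEV, hQV, conj_diag_mul Q hQ2, trace_conj Q hQ2, Matrix.trace_diagonal, colExpand]
  have T_BeV : Matrix.trace (B * exp (-G))
      = ∑ i, ∑ j, w i j * ((mu j - lam i) * Real.exp (mu j)) := by
    have h0 : B * exp (-G) = ((-G) - (-(G+B))) * exp (-G) := by rw [hBeq']
    rw [h0, Matrix.sub_mul, Matrix.trace_sub, T_VeV, T_UeV, dsum_sub]
    exact Finset.sum_congr rfl fun i _ => Finset.sum_congr rfl fun j _ => by ring
  have T_UeU : Matrix.trace ((-(G + B)) * exp (-(G + B)))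
      = ∑ i, ∑ j, w i j * (lam i * Real.exp (lam i)) := by
    rw [hEU, hPU, conj_diag_mul P hP2, trace_conj P hP2, Matrix.trace_diagonal, rowExpand]
  have T_VeU : Matrix.trace ((-G) * exp (-(G + B)))
      = ∑ i, ∑ j, w i j * (mu j * Real.exp (lam i)) := by
    rw [hEU, hQV, atom_swap]
    refine Finset.sum_congr rfl fun i _ => Finset.sum_congr rfl fun j _ => ?_
    simp only [hw]; all_goals ring
  have T_BeU : Matrix.trace (B * exp (-(G + B)))
      = ∑ i, ∑ j, w i j * ((mu j - lam i) * Real.exp (lam i)) := by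
    have h0 : B * exp (-(G+B)) = ((-G) - (-(G+B))) * exp (-(G+B)) := by rw [hBeq']
    rw [h0, Matrix.sub_mul, Matrix.trace_sub, T_VeU, T_UeU, dsum_sub]
    exact Finset.sum_congr rfl fun i _ => Finset.sum_congr rfl fun j _ => by ring
  -- quadratic trace formulas
  have habs : ∀ (X Y E : Mat N), (X - Y) * (X - Y) * E
      = (X * X) * E - (X * Y) * E - (Y * X) * E + (Y * Y) * E := by
    intros X Y E; noncomm_ring
  have cyc : ∀ (X Y E : Mat N), Matrix.trace (X * Y * E) = Matrix.trace (Y * (E * X)) := by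
    intros X Y E
    rw [Matrix.mul_assoc, Matrix.trace_mul_comm, Matrix.mul_assoc]
  -- eV side
  have A1 : Matrix.trace (((-G) * (-G)) * exp (-G))
      = ∑ i, ∑ j, w i j * (mu j * mu j * Real.exp (mu j)) := by
    rw [hEV, hQV, conj_diag_mul Q hQ2, conj_diag_mul Q hQ2, trace_conj Q hQ2,
      Matrix.trace_diagonal, colExpand]
  have A2 : Matrix.trace (((-G) * (-(G+B))) * exp (-G))
      = ∑ i, ∑ j, w i j * (lam i * mu j * Real.exp (mu j)) := by
    rw [cyc, hEV, hPU, hQV, conj_diag_mul Q hQ2, atom]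
    refine Finset.sum_congr rfl fun i _ => Finset.sum_congr rfl fun j _ => ?_
    simp only [hw]; all_goals ring
  have A3 : Matrix.trace (((-(G+B)) * (-G)) * exp (-G))
      = ∑ i, ∑ j, w i j * (lam i * mu j * Real.exp (mu j)) := by
    rw [Matrix.mul_assoc, hEV, hPU, hQV, conj_diag_mul Q hQ2, atom]
    refine Finset.sum_congr rfl fun i _ => Finset.sum_congr rfl fun j _ => ?_
    simp only [hw]; all_goals ring
  have A4 : Matrix.trace (((-(G+B)) * (-(G+B))) * exp (-G))
      = ∑ i, ∑ j, w i j * (lam i * lam i * Real.exp (mu j)) := by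
    rw [hEV, hPU, conj_diag_mul P hP2, atom]
    refine Finset.sum_congr rfl fun i _ => Finset.sum_congr rfl fun j _ => ?_
    simp only [hw]; all_goals ring
  have T_B2eV : Matrix.trace ((B * B) * exp (-G))
      = ∑ i, ∑ j, w i j * ((mu j - lam i)^2 * Real.exp (mu j)) := by
    have h0 : B * B * exp (-G) = ((-G) - (-(G+B))) * ((-G) - (-(G+B))) * exp (-G) := by
      rw [hBeq']
    rw [h0, habs, Matrix.trace_add, Matrix.trace_sub, Matrix.trace_sub,
      A1, A2, A3, A4, dsum_sub, dsum_sub, dsum_add]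
    exact Finset.sum_congr rfl fun i _ => Finset.sum_congr rfl fun j _ => by ring
  -- eU side
  have B1 : Matrix.trace (((-G) * (-G)) * exp (-(G+B)))
      = ∑ i, ∑ j, w i j * (mu j * mu j * Real.exp (lam i)) := by
    rw [hEU, hQV, conj_diag_mul Q hQ2, atom_swap]
    refine Finset.sum_congr rfl fun i _ => Finset.sum_congr rfl fun j _ => ?_
    simp only [hw]; all_goals ring
  have B2 : Matrix.trace (((-G) * (-(G+B))) * exp (-(G+B)))
      = ∑ i, ∑ j, w i j * (mu j * lam i * Real.exp (lam i)) := by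
    rw [Matrix.mul_assoc, hEU, hPU, hQV, conj_diag_mul P hP2, atom_swap]
    refine Finset.sum_congr rfl fun i _ => Finset.sum_congr rfl fun j _ => ?_
    simp only [hw]; all_goals ring
  have B3 : Matrix.trace (((-(G+B)) * (-G)) * exp (-(G+B)))
      = ∑ i, ∑ j, w i j * (mu j * lam i * Real.exp (lam i)) := by
    rw [cyc, hEU, hPU, hQV, conj_diag_mul P hP2, atom_swap]
    refine Finset.sum_congr rfl fun i _ => Finset.sum_congr rfl fun j _ => ?_
    simp only [hw]; all_goals ring
  have B4 : Matrix.trace (((-(G+B)) * (-(G+B))) * exp (-(G+B)))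
      = ∑ i, ∑ j, w i j * (lam i * lam i * Real.exp (lam i)) := by
    rw [hEU, hPU, conj_diag_mul P hP2, conj_diag_mul P hP2, trace_conj P hP2,
      Matrix.trace_diagonal, rowExpand]
  have T_B2eU : Matrix.trace ((B * B) * exp (-(G+B)))
      = ∑ i, ∑ j, w i j * ((mu j - lam i)^2 * Real.exp (lam i)) := by
    have h0 : B * B * exp (-(G+B))
        = ((-G) - (-(G+B))) * ((-G) - (-(G+B))) * exp (-(G+B)) := by
      rw [hBeq']
    rw [h0, habs, Matrix.trace_add, Matrix.trace_sub, Matrix.trace_sub,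
      B1, B2, B3, B4, dsum_sub, dsum_sub, dsum_add]
    exact Finset.sum_congr rfl fun i _ => Finset.sum_congr rfl fun j _ => by ring
  -- the inequalities
  have K1 : Matrix.trace (B * exp (-(G+B)))
      ≤ Matrix.trace (exp (-G)) - Matrix.trace (exp (-(G+B))) := by
    rw [T_BeU, T_eV, T_eU, dsum_sub]
    refine dsum_le _ _ fun i j => ?_
    have h := mul_le_mul_of_nonneg_left (scalarK1 (lam i) (mu j)) (hwpos i j)
    linarith [h]
  have K2 : Matrix.trace (exp (-(G+B))) ≤ Matrix.trace (exp (-G))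
      - Matrix.trace (B * exp (-G)) + Matrix.trace ((B*B) * exp (-G))/2
      + Matrix.trace ((B*B) * exp (-(G+B)))/2 := by
    rw [T_eU, T_eV, T_BeV, T_B2eV, T_B2eU, dsum_div2, dsum_div2, dsum_sub, dsum_add, dsum_add]
    refine dsum_le _ _ fun i j => ?_
    have h := mul_le_mul_of_nonneg_left (scalarKey (lam i) (mu j)) (hwpos i j)
    linarith [h]
  have hEVpsd : (exp (-G)).PosSemidef := by
    rw [hEV]; exact psd_conj Q (fun i => (Real.exp_pos _).le)
  have hEUpsd : (exp (-(G+B))).PosSemidef := by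
    rw [hEU]; exact psd_conj P (fun i => (Real.exp_pos _).le)
  have K3V : Matrix.trace ((B*B) * exp (-G)) ≤ η * Matrix.trace (B * exp (-G)) := by
    have h := psd_trace_mul_nonneg hB2 hEVpsd
    rw [Matrix.sub_mul, Matrix.trace_sub, Matrix.smul_mul, Matrix.trace_smul] at h
    simp only [smul_eq_mul] at h
    linarith
  have K3U : Matrix.trace ((B*B) * exp (-(G+B)))
      ≤ η * Matrix.trace (B * exp (-(G+B))) := by
    have h := psd_trace_mul_nonneg hB2 hEUpsd
    rw [Matrix.sub_mul, Matrix.trace_sub, Matrix.smul_mul, Matrix.trace_smul] at h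
    simp only [smul_eq_mul] at h
    linarith
  -- combine
  have hEta : η * Matrix.trace (B * exp (-(G+B)))
      ≤ η * (Matrix.trace (exp (-G)) - Matrix.trace (exp (-(G+B)))) :=
    mul_le_mul_of_nonneg_left K1 hη0
  have h2η : (0:ℝ) < 2 + η := by linarith
  have key : (2 + η) * Matrix.trace (exp (-(G+B)))
      ≤ (2 + η) * Matrix.trace (exp (-G)) - (2 - η) * Matrix.trace (B * exp (-G)) := by
    linarith [K2, K3V, K3U, hEta]
  have h3 : (2 - η)/(2 + η) * Matrix.trace (B * exp (-G))
      ≤ Matrix.trace (exp (-G)) - Matrix.trace (exp (-(G+B))) := by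
    rw [div_mul_eq_mul_div, div_le_iff₀ h2η]
    linarith [key]
  linarith






/-! remaining auxiliary lemmas -/

lemma herm_smul {A : Mat N} (hA : A.IsHermitian) (c : ℝ) : (c • A).IsHermitian := by
  show (c • A)ᴴ = c • A
  rw [Matrix.conjTranspose_smul, star_trivial, hA.eq]

lemma smul_conj_diag (Q : Mat N) (c : ℝ) (d : Fin N → ℝ) :
    c • (Q * Matrix.diagonal d * star Q) = Q * Matrix.diagonal (fun i => c * d i) * star Q := by
  have h1 : (Matrix.diagonal (fun i => c * d i) : Mat N) = c • Matrix.diagonal d := by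
    ext i j
    by_cases h : i = j <;> simp [Matrix.diagonal_apply, h]
  rw [h1, Matrix.mul_smul, Matrix.smul_mul]

lemma conj_diag_sub (Q : Mat N) (a b : Fin N → ℝ) :
    Q * Matrix.diagonal a * star Q - Q * Matrix.diagonal b * star Q
      = Q * Matrix.diagonal (fun i => a i - b i) * star Q := by
  have h1 : (Matrix.diagonal (fun i => a i - b i) : Mat N)
      = Matrix.diagonal a - Matrix.diagonal b := by
    ext i j
    by_cases h : i = j <;> simp [Matrix.diagonal_apply, h]
  rw [h1, Matrix.mul_sub, Matrix.sub_mul]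

lemma eig_le_specNorm {n : ℕ} {A : Mat (n+1)} (hA : A.IsHermitian) (k : Fin (n+1)) :
    hA.eigenvalues k ≤ specNorm A := by
  have h1 : hA.eigenvalues k ∈ spectrum ℝ A := hA.eigenvalues_mem_spectrum_real k
  have h2 : hA.eigenvalues k ∈ spectrum ℝ
      ((Matrix.toEuclideanCLM (𝕜 := ℝ) A : EuclideanSpace ℝ (Fin (n+1)) →L[ℝ]
        EuclideanSpace ℝ (Fin (n+1)))) := by
    rwa [AlgEquiv.spectrum_eq (Matrix.toEuclideanCLM (𝕜 := ℝ) (n := Fin (n+1))) A]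
  have h3 := spectrum.norm_le_norm_of_mem h2
  calc hA.eigenvalues k ≤ ‖hA.eigenvalues k‖ := le_abs_self _
  _ ≤ _ := h3

lemma exp_herm_rep {A : Mat N} (hA : A.IsHermitian) :
    ∃ Q : Mat N, Q * star Q = 1 ∧ star Q * Q = 1 ∧
      exp A = Q * Matrix.diagonal (fun i => Real.exp (hA.eigenvalues i)) * star Q := by
  obtain ⟨Q, h1, h2, hrep⟩ := decomp hA
  refine ⟨Q, h1, h2, ?_⟩
  conv_lhs => rw [hrep]
  rw [exp_conj_diag Q h1 h2]

lemma exp_psd {A : Mat N} (hA : A.IsHermitian) : (exp A).PosSemidef := by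
  obtain ⟨Q, h1, h2, he⟩ := exp_herm_rep hA
  rw [he]
  exact psd_conj Q (fun i => (Real.exp_pos _).le)

lemma exp_trace_pos [NeZero N] {A : Mat N} (hA : A.IsHermitian) :
    0 < Matrix.trace (exp A) := by
  obtain ⟨Q, h1, h2, he⟩ := exp_herm_rep hA
  rw [he, trace_conj Q h2, Matrix.trace_diagonal]
  exact Finset.sum_pos (fun i _ => Real.exp_pos _) Finset.univ_nonempty

lemma trace_exp_smul_ge {A : Mat N} (hA : A.IsHermitian) (c : ℝ) (k : Fin N) :
    Real.exp (c * hA.eigenvalues k) ≤ Matrix.trace (exp (c • A)) := by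
  obtain ⟨Q, h1, h2, hrep⟩ := decomp hA
  have hrep2 : c • A = Q * Matrix.diagonal (fun i => c * hA.eigenvalues i) * star Q := by
    conv_lhs => rw [hrep]
    rw [smul_conj_diag]
  rw [hrep2, exp_conj_diag Q h1 h2, trace_conj Q h2, Matrix.trace_diagonal]
  exact Finset.single_le_sum (f := fun i => Real.exp (c * hA.eigenvalues i))
    (fun i _ => (Real.exp_pos _).le) (Finset.mem_univ k)

lemma smul_rep {A : Mat N} (hM : A.PosSemidef) (c : ℝ) :
    ∃ Q : Mat N, Q * star Q = 1 ∧ star Q * Q = 1 ∧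
      c • A = Q * Matrix.diagonal (fun i => c * hM.1.eigenvalues i) * star Q := by
  obtain ⟨Q, h1, h2, hrep⟩ := decomp hM.1
  refine ⟨Q, h1, h2, ?_⟩
  conv_lhs => rw [hrep]
  rw [smul_conj_diag]

lemma smul_psd {A : Mat N} (hM : A.PosSemidef) {c : ℝ} (hc : 0 ≤ c) :
    (c • A).PosSemidef := by
  obtain ⟨Q, h1, h2, hrep⟩ := smul_rep hM c
  rw [hrep]
  exact psd_conj Q (fun i => mul_nonneg hc (hM.eigenvalues_nonneg i))

lemma B2psd {n : ℕ} {Mt : Mat (n+1)} (hM : Mt.PosSemidef) {ρ η : ℝ} (hρ : 0 < ρ)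
    (hη : 0 < η) (hn : specNorm Mt ≤ ρ) :
    (η • ((η/ρ) • Mt) - ((η/ρ) • Mt) * ((η/ρ) • Mt)).PosSemidef := by
  obtain ⟨Q, h1, h2, hrep⟩ := smul_rep hM (η/ρ)
  have e1 : η • ((η/ρ) • Mt)
      = Q * Matrix.diagonal (fun i => η * ((η/ρ) * hM.1.eigenvalues i)) * star Q := by
    rw [hrep, smul_conj_diag]
  have e2 : ((η/ρ) • Mt) * ((η/ρ) • Mt)
      = Q * Matrix.diagonal
          (fun i => ((η/ρ) * hM.1.eigenvalues i) * ((η/ρ) * hM.1.eigenvalues i)) * star Q := by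
    rw [hrep, conj_diag_mul Q h2]
  rw [e1, e2, conj_diag_sub]
  refine psd_conj Q (fun i => ?_)
  have hx0 : 0 ≤ hM.1.eigenvalues i := hM.eigenvalues_nonneg i
  have hxρ : hM.1.eigenvalues i ≤ ρ := le_trans (eig_le_specNorm hM.1 i) hn
  have hd : 0 < η/ρ := div_pos hη hρ
  have hy : (η/ρ) * hM.1.eigenvalues i ≤ η := by
    have := mul_le_mul_of_nonneg_left hxρ hd.le
    calc (η/ρ) * hM.1.eigenvalues i ≤ (η/ρ) * ρ := this
    _ = η := by field_simp
  nlinarith [mul_nonneg hd.le hx0]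

lemma herm_sum {M : ℕ → Mat N} (hPSD : ∀ t, (M t).PosSemidef) (t : ℕ) :
    (∑ i ∈ Finset.range t, M i).IsHermitian := by
  show _ = _
  rw [Matrix.conjTranspose_sum]
  exact Finset.sum_congr rfl fun i _ => (hPSD i).1

lemma tr_eq_sumsum {M X : Mat N} (hX : X.IsHermitian) :
    ∑ i, ∑ j, M i j * X i j = Matrix.trace (M * X) := by
  rw [trace_eq_double]
  refine Finset.sum_congr rfl fun i _ => Finset.sum_congr rfl fun j _ => ?_
  have h : X j i = X i j := by
    conv_lhs => rw [← hX.eq]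
    simp [Matrix.conjTranspose_apply]
  rw [h]


end Stmt17Aux

open Matrix NormedSpace

/-- Regret bound for MMWU with PSD feedback matrices: there is an
absolute constant `c > 0` such that for PSD feedback matrices `M_t` with
`‖M_t‖ ≤ ρ` and density matrices `X_t ∝ exp(−(η/ρ) ∑_{i<t} M_i)`,
`λ_min((1/T) ∑_t M_t) ≥ c·((1−η)·(1/T)∑_t ⟨M_t, X_t⟩ − ρ log n/(η T))`. -/
theorem stmt_17 :
    ∃ c : ℝ, 0 < c ∧
    ∀ (n T : ℕ), 0 < T →
    ∀ ρ η : ℝ, 0 < ρ → 0 < η → η < 1 →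
    ∀ M : ℕ → Matrix (Fin (n + 1)) (Fin (n + 1)) ℝ,
      (∀ t, (M t).PosSemidef) →
      (∀ t, specNorm (M t) ≤ ρ) →
      let Xp : ℕ → Matrix (Fin (n + 1)) (Fin (n + 1)) ℝ := fun t =>
        NormedSpace.exp ((-(η / ρ)) • ∑ i ∈ Finset.range t, M i)
      let X : ℕ → Matrix (Fin (n + 1)) (Fin (n + 1)) ℝ := fun t =>
        (Matrix.trace (Xp t))⁻¹ • Xp t
      c * ((1 - η) * ((T : ℝ)⁻¹ *
            ∑ t ∈ Finset.range T, ∑ i, ∑ j, (M t) i j * (X t) i j)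
          - ρ * Real.log (n + 1) / (η * T))
        ≤ lambdaMin ((T : ℝ)⁻¹ • ∑ t ∈ Finset.range T, M t) := by
  refine ⟨1, one_pos, ?_⟩
  intro n T hT ρ η hρ hη hη1 M hPSD hNorm Xp X
  haveI : NeZero (n+1) := ⟨n.succ_ne_zero⟩
  have h2η : (0:ℝ) < 2 + η := by linarith
  set θ : ℝ := (2 - η)/(2 + η) with hθdef
  have hθ1η : 1 - η ≤ θ := by rw [hθdef, le_div_iff₀ h2η]; nlinarith
  have hθpos : 0 < θ := div_pos (by linarith) h2η
  have hηρ : (0:ℝ) < η/ρ := div_pos hη hρ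
  have hTpos : (0:ℝ) < (T:ℝ) := by exact_mod_cast hT
  have hAherm : ∀ t, (∑ i ∈ Finset.range t, M i).IsHermitian := Stmt17Aux.herm_sum hPSD
  have hKherm : ∀ t : ℕ, ((-(η/ρ)) • ∑ i ∈ Finset.range t, M i).IsHermitian :=
    fun t => Stmt17Aux.herm_smul (hAherm t) _
  have hXpdef : ∀ t, Xp t = exp ((-(η/ρ)) • ∑ i ∈ Finset.range t, M i) := fun t => rfl
  have hΦpos : ∀ t, 0 < Matrix.trace (Xp t) := fun t => by
    rw [hXpdef t]; exact Stmt17Aux.exp_trace_pos (hKherm t)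
  have hXppsd : ∀ t, (Xp t).PosSemidef := fun t => by
    rw [hXpdef t]; exact Stmt17Aux.exp_psd (hKherm t)
  have hSnn : ∀ t, 0 ≤ Matrix.trace (M t * Xp t) := fun t =>
    Stmt17Aux.psd_trace_mul_nonneg (hPSD t) (hXppsd t)
  have hSS : ∀ t, (∑ i, ∑ j, M t i j * X t i j)
      = (Matrix.trace (Xp t))⁻¹ * Matrix.trace (M t * Xp t) := by
    intro t
    have hX : X t = (Matrix.trace (Xp t))⁻¹ • Xp t := rfl
    simp only [hX, Matrix.smul_apply, smul_eq_mul]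
    rw [← Stmt17Aux.tr_eq_sumsum (hXppsd t).1, Finset.mul_sum]
    refine Finset.sum_congr rfl fun i _ => ?_
    rw [Finset.mul_sum]
    exact Finset.sum_congr rfl fun j _ => by ring
  -- one step of the potential argument
  have hstep : ∀ t, Matrix.trace (Xp (t+1))
      ≤ Matrix.trace (Xp t) - θ * ((η/ρ) * Matrix.trace (M t * Xp t)) := by
    intro t
    have hG : ((η/ρ) • ∑ i ∈ Finset.range t, M i).IsHermitian :=
      Stmt17Aux.herm_smul (hAherm t) _
    have hB : ((η/ρ) • M t).PosSemidef := Stmt17Aux.smul_psd (hPSD t) hηρ.le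
    have hB2 := Stmt17Aux.B2psd (hPSD t) hρ hη (hNorm t)
    have h := Stmt17Aux.step _ _ hG hB hη.le hB2
    have hGK : -((η/ρ) • ∑ i ∈ Finset.range t, M i)
        = (-(η/ρ)) • ∑ i ∈ Finset.range t, M i := by rw [neg_smul]
    have hGBK : -((η/ρ) • ∑ i ∈ Finset.range t, M i + (η/ρ) • M t)
        = (-(η/ρ)) • ∑ i ∈ Finset.range (t+1), M i := by
      rw [← smul_add, ← Finset.sum_range_succ, neg_smul]
    rw [hGBK, hGK, Matrix.smul_mul, Matrix.trace_smul, smul_eq_mul] at h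
    rw [hθdef]
    exact h
  set Gsum : ℕ → ℝ := fun t =>
    ∑ r ∈ Finset.range t, (Matrix.trace (Xp r))⁻¹ * Matrix.trace (M r * Xp r) with hGsumdef
  have hGnn : ∀ t, 0 ≤ Gsum t := fun t =>
    Finset.sum_nonneg fun r _ => mul_nonneg (inv_nonneg.2 (hΦpos r).le) (hSnn r)
  -- potential bound by induction
  have hpot : ∀ t, Matrix.trace (Xp t) ≤ (n+1 : ℝ) * Real.exp (-(θ*(η/ρ)) * Gsum t) := by
    intro t
    induction t with
    | zero =>
      have h0 : Xp 0 = 1 := by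
        rw [hXpdef 0]
        simp [NormedSpace.exp_zero]
      have hG0 : Gsum 0 = 0 := by simp [hGsumdef]
      rw [h0, hG0, Matrix.trace_one]
      simp
    | succ t ih =>
      have h1 := hstep t
      have hΦt := hΦpos t
      set s : ℝ := (Matrix.trace (Xp t))⁻¹ * Matrix.trace (M t * Xp t) with hs
      have hsnn : 0 ≤ s := mul_nonneg (inv_nonneg.2 hΦt.le) (hSnn t)
      have hfac : Matrix.trace (M t * Xp t) = Matrix.trace (Xp t) * s := by
        rw [hs]; field_simp
      rw [hfac] at h1
      have h2 : Matrix.trace (Xp (t+1)) ≤ Matrix.trace (Xp t) * (1 - θ*(η/ρ)*s) := by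
        nlinarith [h1]
      have h3 : (1 - θ*(η/ρ)*s) ≤ Real.exp (-(θ*(η/ρ)*s)) := by
        have := Real.add_one_le_exp (-(θ*(η/ρ)*s)); linarith
      have h4 : Matrix.trace (Xp (t+1)) ≤ Matrix.trace (Xp t) * Real.exp (-(θ*(η/ρ)*s)) :=
        le_trans h2 (mul_le_mul_of_nonneg_left h3 hΦt.le)
      have h5 : Matrix.trace (Xp t) * Real.exp (-(θ*(η/ρ)*s))
          ≤ ((n+1:ℝ) * Real.exp (-(θ*(η/ρ)) * Gsum t)) * Real.exp (-(θ*(η/ρ)*s)) :=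
        mul_le_mul_of_nonneg_right ih (Real.exp_pos _).le
      have hGs : Gsum (t+1) = Gsum t + s := by
        simp only [hGsumdef, hs]
        rw [Finset.sum_range_succ]
      have h6 : ((n+1:ℝ) * Real.exp (-(θ*(η/ρ)) * Gsum t)) * Real.exp (-(θ*(η/ρ)*s))
          = (n+1:ℝ) * Real.exp (-(θ*(η/ρ)) * Gsum (t+1)) := by
        rw [mul_assoc, ← Real.exp_add, hGs]
        congr 2
        ring
      exact h4.trans (h5.trans_eq h6)
  -- final eigenvalue bound
  have hSmherm : ((T:ℝ)⁻¹ • ∑ i ∈ Finset.range T, M i).IsHermitian :=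
    Stmt17Aux.herm_smul (hAherm T) _
  rw [one_mul]
  unfold lambdaMin
  rw [dif_pos hSmherm]
  refine Finset.le_inf' _ _ (fun k _ => ?_)
  have hTne : (T:ℝ) ≠ 0 := hTpos.ne'
  have hKT : ((-(η/ρ)) • ∑ i ∈ Finset.range T, M i)
      = ((-(η/ρ)) * (T:ℝ)) • ((T:ℝ)⁻¹ • ∑ i ∈ Finset.range T, M i) := by
    rw [smul_smul]
    congr 1
    field_simp
    all_goals ring
  have hray := Stmt17Aux.trace_exp_smul_ge hSmherm ((-(η/ρ)) * (T:ℝ)) k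
  rw [← hKT] at hray
  have hchain : Real.exp ((-(η/ρ)) * (T:ℝ) * hSmherm.eigenvalues k)
      ≤ (n+1:ℝ) * Real.exp (-(θ*(η/ρ)) * Gsum T) := le_trans hray (hpot T)
  have hlog := Real.log_le_log (Real.exp_pos _) hchain
  rw [Real.log_exp, Real.log_mul (by positivity) (Real.exp_ne_zero _), Real.log_exp] at hlog
  have hstat : ∑ t ∈ Finset.range T, ∑ i, ∑ j, M t i j * X t i j = Gsum T :=
    Finset.sum_congr rfl fun t _ => hSS t
  rw [hstat]
  have hGT := hGnn T
  have hf : (0:ℝ) < (η/ρ) * T := by positivity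
  have hmono : (1-η) * ((η/ρ) * Gsum T) ≤ θ * ((η/ρ) * Gsum T) :=
    mul_le_mul_of_nonneg_right hθ1η (mul_nonneg hηρ.le hGT)
  have hexp1 : ((1-η) * ((T:ℝ)⁻¹ * Gsum T) - ρ * Real.log ((n:ℝ)+1) / (η*(T:ℝ))) * ((η/ρ) * (T:ℝ))
      = (1-η) * ((η/ρ) * Gsum T) - Real.log ((n:ℝ)+1) := by
    field_simp
    all_goals ring
  have hkey : θ * ((η/ρ) * Gsum T) - Real.log ((n:ℝ)+1)
      ≤ ((η/ρ)*(T:ℝ)) * hSmherm.eigenvalues k := by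
    linarith [hlog]
  have hfinal : ((1-η) * ((T:ℝ)⁻¹ * Gsum T) - ρ * Real.log ((n:ℝ)+1) / (η*(T:ℝ))) * ((η/ρ)*(T:ℝ))
      ≤ hSmherm.eigenvalues k * ((η/ρ)*(T:ℝ)) := by
    rw [hexp1, mul_comm (hSmherm.eigenvalues k)]
    linarith [hmono, hkey]
  exact (mul_le_mul_iff_of_pos_right hf).mp hfinal
end
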